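/- arXiv:1004.1214 — 5 statements merged into one kernel-verified Lean document; each statement's English description precedes it below -/
import Mathlib

section
/- Let A be a finite-dimensional algebra over a field k, ρ ∈ A ⊗ A, and t_d, t_u commuting linear automorphisms of A. Then (A, ρ, t_d, t_u) is an oriented quantum algebra over k if and only if (A*, b_ρ, t_d*, t_u*) is a strict oriented quantum coalgebra over k, where b_ρ(f, g) = (f ⊗ g)(ρ). -/
open TensorProduct

noncomputable section

variable {k : Type*} [Field k]

section CoalgebraDefs

variable {C : Type*} [AddCommGroup C] [Module k C]
variable {D : Type*} [AddCommGroup D] [Module k D]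

/-- `b'` is a (two-sided convolution) inverse for the bilinear form `b`. -/
def IsInverseForm (ΔC : C →ₗ[k] C ⊗[k] C) (εC : C →ₗ[k] k)
    (ΔD : D →ₗ[k] D ⊗[k] D) (εD : D →ₗ[k] k)
    (b b' : C →ₗ[k] D →ₗ[k] k) : Prop :=
  ∀ (c : C) (d : D) (n m : ℕ) (c1 c2 : Fin n → C) (d1 d2 : Fin m → D),
    ΔC c = ∑ i, c1 i ⊗ₜ[k] c2 i →
    ΔD d = ∑ j, d1 j ⊗ₜ[k] d2 j →
    (∑ i, ∑ j, b' (c1 i) (d1 j) * b (c2 i) (d2 j) = εC c * εD d) ∧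
    (∑ i, ∑ j, b (c1 i) (d1 j) * b' (c2 i) (d2 j) = εC c * εD d)

/-- `T` is a coalgebra automorphism of `C` with respect to the set `𝒮` of bilinear forms. -/
def IsCoalgAutoWrt (Δ : C →ₗ[k] C ⊗[k] C) (εm : C →ₗ[k] k)
    (𝒮 : Set (C →ₗ[k] C →ₗ[k] k)) (T : C →ₗ[k] C) : Prop :=
  Function.Bijective T ∧ (∀ c, εm (T c) = εm c) ∧
  ∀ β ∈ 𝒮, ∀ β' ∈ 𝒮, ∀ (c d e : C) (n m : ℕ)
    (c1 c2 : Fin n → C) (f1 f2 : Fin m → C),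
    Δ c = ∑ i, c1 i ⊗ₜ[k] c2 i →
    Δ (T c) = ∑ j, f1 j ⊗ₜ[k] f2 j →
    (∑ i, β (T (c1 i)) d * β' (T (c2 i)) e = ∑ j, β (f1 j) d * β' (f2 j) e) ∧
    (∑ i, β d (T (c1 i)) * β' e (T (c2 i)) = ∑ j, β d (f1 j) * β' e (f2 j))

/-- `T` is an ordinary coalgebra automorphism. -/
def IsCoalgAuto (Δ : C →ₗ[k] C ⊗[k] C) (εm : C →ₗ[k] k) (T : C →ₗ[k] C) : Prop :=
  Function.Bijective T ∧ (∀ c, εm (T c) = εm c) ∧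
  Δ ∘ₗ T = (TensorProduct.map T T) ∘ₗ Δ

/-- Axiom (qc.1). -/
def QC1 (Δ : C →ₗ[k] C ⊗[k] C) (εm : C →ₗ[k] k)
    (b binv : C →ₗ[k] C →ₗ[k] k) (Td Tu : C →ₗ[k] C) : Prop :=
  ∀ (c d : C) (n m : ℕ) (c1 c2 : Fin n → C) (d1 d2 : Fin m → C),
    Δ c = ∑ i, c1 i ⊗ₜ[k] c2 i →
    Δ d = ∑ j, d1 j ⊗ₜ[k] d2 j →
    (∑ i, ∑ j, b (c1 i) (Tu (d2 j)) * binv (Td (c2 i)) (d1 j) = εm c * εm d) ∧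
    (∑ i, ∑ j, binv (Td (c1 i)) (d2 j) * b (c2 i) (Tu (d1 j)) = εm c * εm d)

/-- Axiom (qc.2). -/
def QC2 (b : C →ₗ[k] C →ₗ[k] k) (Td Tu : C →ₗ[k] C) : Prop :=
  ∀ c d : C, b (Td c) (Td d) = b c d ∧ b (Tu c) (Tu d) = b c d

/-- Axiom (qc.3), the quantum coalgebra Yang–Baxter relation. -/
def QC3 (Δ : C →ₗ[k] C ⊗[k] C) (b : C →ₗ[k] C →ₗ[k] k) : Prop :=
  ∀ (c d e : C) (n m p : ℕ) (c1 c2 : Fin n → C) (d1 d2 : Fin m → C) (e1 e2 : Fin p → C),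
    Δ c = ∑ i, c1 i ⊗ₜ[k] c2 i →
    Δ d = ∑ j, d1 j ⊗ₜ[k] d2 j →
    Δ e = ∑ l, e1 l ⊗ₜ[k] e2 l →
    ∑ i, ∑ j, ∑ l, b (c1 i) (d1 j) * b (c2 i) (e1 l) * b (d2 j) (e2 l)
      = ∑ i, ∑ j, ∑ l, b (c2 i) (d2 j) * b (c1 i) (e2 l) * b (d1 j) (e1 l)

/-- Oriented quantum coalgebra, with comultiplication `Δ`, counit `εm`, bilinear form `b`
with inverse `binv`, and structure maps `Td`, `Tu`. -/
def IsOrientedQuantumCoalgebra (Δ : C →ₗ[k] C ⊗[k] C) (εm : C →ₗ[k] k)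
    (b binv : C →ₗ[k] C →ₗ[k] k) (Td Tu : C →ₗ[k] C) : Prop :=
  IsInverseForm Δ εm Δ εm b binv ∧
  IsCoalgAutoWrt Δ εm {b, binv} Td ∧
  IsCoalgAutoWrt Δ εm {b, binv} Tu ∧
  Td ∘ₗ Tu = Tu ∘ₗ Td ∧
  QC1 Δ εm b binv Td Tu ∧ QC2 b Td Tu ∧ QC3 Δ b

/-- Strict oriented quantum coalgebra. -/
def IsStrictOrientedQuantumCoalgebra (Δ : C →ₗ[k] C ⊗[k] C) (εm : C →ₗ[k] k)
    (b binv : C →ₗ[k] C →ₗ[k] k) (Td Tu : C →ₗ[k] C) : Prop :=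
  IsInverseForm Δ εm Δ εm b binv ∧
  IsCoalgAuto Δ εm Td ∧ IsCoalgAuto Δ εm Tu ∧
  Td ∘ₗ Tu = Tu ∘ₗ Td ∧
  QC1 Δ εm b binv Td Tu ∧ QC2 b Td Tu ∧ QC3 Δ b

/-- Quantum coalgebra `(C, b, S)`: `S : C → C^cop` is a coalgebra isomorphism with
respect to `b`, `b` is invertible with inverse `b(S(·),·)` (axiom (QC.1)), and
(QC.2), (QC.3) hold. -/
def IsQuantumCoalgebra (Δ : C →ₗ[k] C ⊗[k] C) (εm : C →ₗ[k] k)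
    (b : C →ₗ[k] C →ₗ[k] k) (S : C →ₗ[k] C) : Prop :=
  Function.Bijective S ∧ (∀ c, εm (S c) = εm c) ∧
  (∀ (c d e : C) (n m : ℕ) (c1 c2 : Fin n → C) (f1 f2 : Fin m → C),
    Δ c = ∑ i, c1 i ⊗ₜ[k] c2 i →
    Δ (S c) = ∑ j, f1 j ⊗ₜ[k] f2 j →
    (∑ i, b (S (c1 i)) d * b (S (c2 i)) e = ∑ j, b (f2 j) d * b (f1 j) e) ∧
    (∑ i, b d (S (c1 i)) * b e (S (c2 i)) = ∑ j, b d (f2 j) * b e (f1 j))) ∧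
  IsInverseForm Δ εm Δ εm b (b ∘ₗ S) ∧
  (∀ c d, b (S c) (S d) = b c d) ∧
  QC3 Δ b

/-- Strict quantum coalgebra `(C, b, S)`: `S : C → C^cop` is an ordinary coalgebra
isomorphism and (QC.1)–(QC.3) hold. -/
def IsStrictQuantumCoalgebra (Δ : C →ₗ[k] C ⊗[k] C) (εm : C →ₗ[k] k)
    (b : C →ₗ[k] C →ₗ[k] k) (S : C →ₗ[k] C) : Prop :=
  Function.Bijective S ∧ (∀ c, εm (S c) = εm c) ∧
  (∀ c, (TensorProduct.comm k C C) (Δ (S c)) = TensorProduct.map S S (Δ c)) ∧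
  IsInverseForm Δ εm Δ εm b (b ∘ₗ S) ∧
  (∀ c d, b (S c) (S d) = b c d) ∧
  QC3 Δ b

end CoalgebraDefs

section AlgebraDefs

variable {A : Type*} [Ring A] [Algebra k A]

def rho12 (ρ : A ⊗[k] A) : (A ⊗[k] A) ⊗[k] A := ρ ⊗ₜ[k] (1 : A)

def rho13 (ρ : A ⊗[k] A) : (A ⊗[k] A) ⊗[k] A :=
  TensorProduct.map ((TensorProduct.mk k A A).flip 1) LinearMap.id ρ

def rho23 (ρ : A ⊗[k] A) : (A ⊗[k] A) ⊗[k] A :=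
  TensorProduct.map (TensorProduct.mk k A A 1) LinearMap.id ρ

/-- The quantum Yang–Baxter equation for `ρ ∈ A ⊗ A`. -/
def QYBE (ρ : A ⊗[k] A) : Prop :=
  rho12 ρ * rho13 ρ * rho23 ρ = rho23 ρ * rho13 ρ * rho12 ρ

/-- Quantum algebra `(A, ρ, s)`. -/
def IsQuantumAlgebra (ρ : A ⊗[k] A) (s : A →ₗ[k] A) : Prop :=
  Function.Bijective s ∧ s 1 = 1 ∧ (∀ a b : A, s (a * b) = s b * s a) ∧
  ρ * TensorProduct.map s LinearMap.id ρ = 1 ∧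
  TensorProduct.map s LinearMap.id ρ * ρ = 1 ∧
  TensorProduct.map s s ρ = ρ ∧
  QYBE ρ

def opL (k A : Type*) [Field k] [Ring A] [Algebra k A] : A →ₗ[k] Aᵐᵒᵖ :=
  (MulOpposite.opLinearEquiv k).toLinearMap

/-- Oriented quantum algebra `(A, ρ, t_d, t_u)`. -/
def IsOrientedQuantumAlgebra (ρ : A ⊗[k] A) (td tu : A →ₗ[k] A) : Prop :=
  Function.Bijective td ∧ td 1 = 1 ∧ (∀ a b : A, td (a * b) = td a * td b) ∧
  Function.Bijective tu ∧ tu 1 = 1 ∧ (∀ a b : A, tu (a * b) = tu a * tu b) ∧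
  td ∘ₗ tu = tu ∘ₗ td ∧
  ∃ ρinv : A ⊗[k] A, ρ * ρinv = 1 ∧ ρinv * ρ = 1 ∧
    TensorProduct.map td (opL k A) ρinv * TensorProduct.map LinearMap.id (opL k A ∘ₗ tu) ρ = 1 ∧
    TensorProduct.map LinearMap.id (opL k A ∘ₗ tu) ρ * TensorProduct.map td (opL k A) ρinv = 1 ∧
    TensorProduct.map td td ρ = ρ ∧ TensorProduct.map tu tu ρ = ρ ∧
    QYBE ρ

/-- The comultiplication of the dual coalgebra of a finite-dimensional algebra. -/
def dualComul (k A : Type*) [Field k] [Ring A] [Algebra k A] [FiniteDimensional k A] :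
    Module.Dual k A →ₗ[k] Module.Dual k A ⊗[k] Module.Dual k A :=
  (TensorProduct.dualDistribEquiv k A A).symm.toLinearMap ∘ₗ (LinearMap.mul' k A).dualMap

/-- The counit of the dual coalgebra: evaluation at `1`. -/
def dualCounit (k A : Type*) [Field k] [Ring A] [Algebra k A] : Module.Dual k A →ₗ[k] k :=
  Module.Dual.eval k A 1

/-- The bilinear form `b_ρ` on the dual: `b_ρ(f, g) = (f ⊗ g)(ρ)`. -/
def dualForm {A : Type*} [Ring A] [Algebra k A] (ρ : A ⊗[k] A) :
    Module.Dual k A →ₗ[k] Module.Dual k A →ₗ[k] k :=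
  TensorProduct.curry ((Module.Dual.eval k (A ⊗[k] A) ρ) ∘ₗ TensorProduct.dualDistrib k A A)

/-- The embedding `A → A ⊕ A^op` onto the first summand. -/
def inlA (k A : Type*) [Field k] [Ring A] [Algebra k A] : A →ₗ[k] A × Aᵐᵒᵖ :=
  LinearMap.inl k A Aᵐᵒᵖ

/-- The embedding `a ↦ ā` of `A` onto the second summand `A^op` of `A ⊕ A^op`. -/
def inrA (k A : Type*) [Field k] [Ring A] [Algebra k A] : A →ₗ[k] A × Aᵐᵒᵖ :=
  LinearMap.inr k A Aᵐᵒᵖ ∘ₗ opL k A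

/-- The element `𝝆` of the doubling construction. -/
def doubleRho (ρ ρinv : A ⊗[k] A) (td' tu' : A →ₗ[k] A) :
    (A × Aᵐᵒᵖ) ⊗[k] (A × Aᵐᵒᵖ) :=
  TensorProduct.map (inlA k A) (inlA k A) ρ + TensorProduct.map (inrA k A) (inrA k A) ρ
    + TensorProduct.map (inrA k A) (inlA k A) ρinv
    + TensorProduct.map (inlA k A) (inrA k A ∘ₗ td' ∘ₗ tu') ρinv

/-- The map `𝐬(a ⊕ b) = b ⊕ t_d⁻¹∘t_u⁻¹(a)` of the doubling construction,
where `td'`, `tu'` are the inverses of `t_d`, `t_u`. -/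
def doubleS {A : Type*} [Ring A] [Algebra k A] (td' tu' : A →ₗ[k] A) :
    A × Aᵐᵒᵖ →ₗ[k] A × Aᵐᵒᵖ :=
  LinearMap.prod ((MulOpposite.opLinearEquiv k).symm.toLinearMap ∘ₗ LinearMap.snd k A Aᵐᵒᵖ)
    ((MulOpposite.opLinearEquiv k).toLinearMap ∘ₗ td' ∘ₗ tu' ∘ₗ LinearMap.fst k A Aᵐᵒᵖ)

/-- The diagonal extension `t ⊕ t` of an automorphism `t` of `A` to `A ⊕ A^op`. -/
def doubleT {A : Type*} [Ring A] [Algebra k A] (t : A →ₗ[k] A) :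
    A × Aᵐᵒᵖ →ₗ[k] A × Aᵐᵒᵖ :=
  LinearMap.prodMap t ((MulOpposite.opLinearEquiv k).toLinearMap ∘ₗ t ∘ₗ
    (MulOpposite.opLinearEquiv k).symm.toLinearMap)

end AlgebraDefs

end

noncomputable section Aux

open TensorProduct

variable {k : Type*} [Field k]

section Generic
variable {M N : Type*} [AddCommGroup M] [Module k M] [AddCommGroup N] [Module k N]

/-- The pure-tensor functional. -/
noncomputable def pairG (F : Module.Dual k M) (G : Module.Dual k N) : M ⊗[k] N →ₗ[k] k :=
  TensorProduct.dualDistrib k M N (F ⊗ₜ G)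

lemma pairG_tmul (F : Module.Dual k M) (G : Module.Dual k N) (m : M) (n : N) :
    pairG F G (m ⊗ₜ n) = F m * G n := rfl

lemma exists_fin_rep (x : M ⊗[k] N) :
    ∃ (n : ℕ) (a : Fin n → M) (b : Fin n → N), x = ∑ i, a i ⊗ₜ[k] b i := by
  induction x using TensorProduct.induction_on with
  | zero => exact ⟨0, ![], ![], by simp⟩
  | tmul m n => exact ⟨1, ![m], ![n], by simp⟩
  | add x y hx hy =>
      obtain ⟨n, a, b, rfl⟩ := hx
      obtain ⟨m, c, d, rfl⟩ := hy
      refine ⟨n + m, Fin.append a c, Fin.append b d, ?_⟩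
      rw [Fin.sum_univ_add]
      simp

lemma dual_sep {x y : M} (h : ∀ F : Module.Dual k M, F x = F y) : x = y := by
  rw [← sub_eq_zero, ← Module.forall_dual_apply_eq_zero_iff k (x - y)]
  intro φ
  rw [map_sub, h φ, sub_self]

lemma dualDistribEquiv_apply' [Module.Finite k M] [Module.Finite k N]
    (t : Module.Dual k M ⊗[k] Module.Dual k N) :
    TensorProduct.dualDistribEquiv k M N t = TensorProduct.dualDistrib k M N t := rfl

lemma pair_sep [Module.Finite k M] [Module.Finite k N] {x y : M ⊗[k] N}
    (h : ∀ (F : Module.Dual k M) (G : Module.Dual k N), pairG F G x = pairG F G y) :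
    x = y := by
  apply dual_sep (k := k)
  intro φ
  have hφ : φ = TensorProduct.dualDistrib k M N ((TensorProduct.dualDistribEquiv k M N).symm φ) := by
    rw [← dualDistribEquiv_apply', LinearEquiv.apply_symm_apply]
  rw [hφ]
  generalize (TensorProduct.dualDistribEquiv k M N).symm φ = t
  induction t using TensorProduct.induction_on with
  | zero => simp
  | tmul F G => exact h F G
  | add s t hs ht => simp only [map_add, LinearMap.add_apply, hs, ht]

end Generic

section AlgAux

variable {A : Type*} [Ring A] [Algebra k A] [FiniteDimensional k A]

lemma pairG_add_left {M N : Type*} [AddCommGroup M] [Module k M] [AddCommGroup N] [Module k N]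
    (F F' : Module.Dual k M) (G : Module.Dual k N) (z : M ⊗[k] N) :
    pairG (F + F') G z = pairG F G z + pairG F' G z := by
  simp [pairG, add_tmul]

lemma sep3 {x y : (A ⊗[k] A) ⊗[k] A}
    (h : ∀ F G H : Module.Dual k A, pairG (pairG F G) H x = pairG (pairG F G) H y) :
    x = y := by
  apply pair_sep (k := k)
  intro Φ H
  have hΦ : Φ = TensorProduct.dualDistrib k A A ((TensorProduct.dualDistribEquiv k A A).symm Φ) := by
    rw [← dualDistribEquiv_apply', LinearEquiv.apply_symm_apply]
  rw [hΦ]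
  generalize (TensorProduct.dualDistribEquiv k A A).symm Φ = t
  induction t using TensorProduct.induction_on with
  | zero => simp [pairG, zero_tmul]
  | tmul F G => exact h F G H
  | add s t hs ht => rw [map_add, pairG_add_left, pairG_add_left, hs, ht]

lemma comul_eval (F : Module.Dual k A) :
    TensorProduct.dualDistribEquiv k A A (dualComul k A F) = (LinearMap.mul' k A).dualMap F :=
  (TensorProduct.dualDistribEquiv k A A).apply_symm_apply _

lemma comul_rep {F : Module.Dual k A} {n : ℕ} {F1 F2 : Fin n → Module.Dual k A}
    (h : dualComul k A F = ∑ i, F1 i ⊗ₜ[k] F2 i) (a b : A) :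
    ∑ i, F1 i a * F2 i b = F (a * b) := by
  have h2 : (LinearMap.mul' k A).dualMap F
      = TensorProduct.dualDistrib k A A (∑ i, F1 i ⊗ₜ[k] F2 i) := by
    rw [← comul_eval, h, dualDistribEquiv_apply']
  have h3 := congrArg (fun φ : Module.Dual k (A ⊗[k] A) => φ (a ⊗ₜ[k] b)) h2
  simp only [LinearMap.dualMap_apply, LinearMap.mul'_apply, dualDistribEquiv_apply',
    map_sum, LinearMap.coe_sum, Finset.sum_apply, TensorProduct.dualDistrib_apply] at h3
  rw [← h3]


lemma sum2_factor {n m : ℕ} (α : Fin n → k) (β : Fin m → k) :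
    ∑ i, ∑ j, α i * β j = (∑ i, α i) * (∑ j, β j) := by
  rw [Finset.sum_mul_sum]

lemma sum3_factor {n m p : ℕ} (α : Fin n → k) (β : Fin m → k) (γ : Fin p → k) :
    ∑ i, ∑ j, ∑ l, α i * β j * γ l = (∑ i, α i) * (∑ j, β j) * (∑ l, γ l) := by
  rw [Finset.sum_mul_sum, Finset.sum_mul_sum]
  simp only [Finset.mul_sum, Finset.sum_mul]
  exact Finset.sum_congr rfl fun i _ => Finset.sum_comm

lemma rho12_add (x y : A ⊗[k] A) : rho12 (k := k) (x + y) = rho12 x + rho12 y := by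
  simp [rho12, add_tmul]

lemma rho13_add (x y : A ⊗[k] A) : rho13 (k := k) (x + y) = rho13 x + rho13 y := by
  simp [rho13]

lemma rho23_add (x y : A ⊗[k] A) : rho23 (k := k) (x + y) = rho23 x + rho23 y := by
  simp [rho23]

variable {n m p : ℕ} {F G H : Module.Dual k A}
  {F1 F2 : Fin n → Module.Dual k A} {G1 G2 : Fin m → Module.Dual k A}
  {H1 H2 : Fin p → Module.Dual k A}

lemma pair_mul (hF : ∀ a b, ∑ i, F1 i a * F2 i b = F (a * b))
    (hG : ∀ a b, ∑ j, G1 j a * G2 j b = G (a * b)) (x y : A ⊗[k] A) :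
    ∑ i, ∑ j, pairG (F1 i) (G1 j) x * pairG (F2 i) (G2 j) y = pairG F G (x * y) := by
  induction x using TensorProduct.induction_on with
  | zero => simp [zero_mul]
  | add x₁ x₂ h₁ h₂ =>
      simp only [map_add, add_mul, mul_add, Finset.sum_add_distrib, h₁, h₂]
  | tmul a b =>
    induction y using TensorProduct.induction_on with
    | zero => simp [mul_zero]
    | add y₁ y₂ h₁ h₂ =>
        simp only [map_add, add_mul, mul_add, Finset.sum_add_distrib, h₁, h₂]
    | tmul c d =>
        rw [Algebra.TensorProduct.tmul_mul_tmul]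
        simp only [pairG_tmul]
        have e : ∀ (i : Fin n) (j : Fin m),
            F1 i a * G1 j b * (F2 i c * G2 j d)
              = (F1 i a * F2 i c) * (G1 j b * G2 j d) := by intros; ring
        simp_rw [e]
        rw [sum2_factor, hF, hG]

lemma pair_mulOp (hF : ∀ a b, ∑ i, F1 i a * F2 i b = F (a * b))
    (hG : ∀ a b, ∑ j, G1 j a * G2 j b = G (a * b)) (x y : A ⊗[k] A) :
    ∑ i, ∑ j, pairG (F1 i) (G2 j) x * pairG (F2 i) (G1 j) y
      = pairG F G (TensorProduct.map LinearMap.id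
          (MulOpposite.opLinearEquiv k).symm.toLinearMap
          (TensorProduct.map LinearMap.id (opL k A) x
            * TensorProduct.map LinearMap.id (opL k A) y)) := by
  induction x using TensorProduct.induction_on with
  | zero => simp [zero_mul]
  | add x₁ x₂ h₁ h₂ =>
      simp only [map_add, add_mul, mul_add, Finset.sum_add_distrib, h₁, h₂]
  | tmul a v =>
    induction y using TensorProduct.induction_on with
    | zero => simp [mul_zero]
    | add y₁ y₂ h₁ h₂ =>
        simp only [map_add, add_mul, mul_add, Finset.sum_add_distrib, h₁, h₂]
    | tmul c d =>
        rw [TensorProduct.map_tmul, TensorProduct.map_tmul,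
          Algebra.TensorProduct.tmul_mul_tmul, TensorProduct.map_tmul]
        simp only [pairG_tmul, LinearMap.id_coe, id_eq, opL, LinearEquiv.coe_coe,
          MulOpposite.coe_opLinearEquiv, MulOpposite.coe_opLinearEquiv_symm]
        rw [show MulOpposite.unop (MulOpposite.op v * MulOpposite.op d) = d * v by simp]
        have e : ∀ (i : Fin n) (j : Fin m),
            F1 i a * G2 j v * (F2 i c * G1 j d)
              = (F1 i a * F2 i c) * (G1 j d * G2 j v) := by intros; ring
        simp_rw [e]
        rw [sum2_factor, hF, hG]

lemma pair_ybe (hF : ∀ a b, ∑ i, F1 i a * F2 i b = F (a * b))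
    (hG : ∀ a b, ∑ j, G1 j a * G2 j b = G (a * b))
    (hH : ∀ a b, ∑ l, H1 l a * H2 l b = H (a * b)) (x y z : A ⊗[k] A) :
    ∑ i, ∑ j, ∑ l, pairG (F1 i) (G1 j) x * pairG (F2 i) (H1 l) y * pairG (G2 j) (H2 l) z
      = pairG (pairG F G) H (rho12 x * rho13 y * rho23 z) := by
  induction x using TensorProduct.induction_on with
  | zero => simp [rho12, zero_tmul, zero_mul]
  | add x₁ x₂ h₁ h₂ =>
      simp only [rho12_add, map_add, add_mul, mul_add, Finset.sum_add_distrib, h₁, h₂]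
  | tmul a b =>
    induction y using TensorProduct.induction_on with
    | zero => simp [rho13, zero_mul, mul_zero]
    | add y₁ y₂ h₁ h₂ =>
        simp only [rho13_add, map_add, add_mul, mul_add, Finset.sum_add_distrib, h₁, h₂]
    | tmul c d =>
      induction z using TensorProduct.induction_on with
      | zero => simp [rho23, zero_mul, mul_zero]
      | add z₁ z₂ h₁ h₂ =>
          simp only [rho23_add, map_add, add_mul, mul_add, Finset.sum_add_distrib, h₁, h₂]
      | tmul e f =>
          rw [show rho12 (a ⊗ₜ[k] b) = (a ⊗ₜ[k] b) ⊗ₜ[k] (1 : A) from rfl]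
          rw [show rho13 (c ⊗ₜ[k] d) = (c ⊗ₜ[k] (1 : A)) ⊗ₜ[k] d from rfl]
          rw [show rho23 (e ⊗ₜ[k] f) = ((1 : A) ⊗ₜ[k] e) ⊗ₜ[k] f from rfl]
          rw [Algebra.TensorProduct.tmul_mul_tmul, Algebra.TensorProduct.tmul_mul_tmul,
            Algebra.TensorProduct.tmul_mul_tmul, Algebra.TensorProduct.tmul_mul_tmul]
          simp only [pairG_tmul, mul_one, one_mul]
          have e' : ∀ (i : Fin n) (j : Fin m) (l : Fin p),
              F1 i a * G1 j b * (F2 i c * H1 l d) * (G2 j e * H2 l f)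
                = (F1 i a * F2 i c) * (G1 j b * G2 j e) * (H1 l d * H2 l f) := by
            intros; ring
          simp_rw [e']
          rw [sum3_factor, hF, hG, hH, mul_assoc]

lemma pair_ybe' (hF : ∀ a b, ∑ i, F1 i a * F2 i b = F (a * b))
    (hG : ∀ a b, ∑ j, G1 j a * G2 j b = G (a * b))
    (hH : ∀ a b, ∑ l, H1 l a * H2 l b = H (a * b)) (x y z : A ⊗[k] A) :
    ∑ i, ∑ j, ∑ l, pairG (F2 i) (G2 j) x * pairG (F1 i) (H2 l) y * pairG (G1 j) (H1 l) z
      = pairG (pairG F G) H (rho23 z * rho13 y * rho12 x) := by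
  induction x using TensorProduct.induction_on with
  | zero => simp [rho12, zero_tmul, mul_zero]
  | add x₁ x₂ h₁ h₂ =>
      simp only [rho12_add, map_add, add_mul, mul_add, Finset.sum_add_distrib, h₁, h₂]
  | tmul a b =>
    induction y using TensorProduct.induction_on with
    | zero => simp [rho13, zero_mul, mul_zero]
    | add y₁ y₂ h₁ h₂ =>
        simp only [rho13_add, map_add, add_mul, mul_add, Finset.sum_add_distrib, h₁, h₂]
    | tmul c d =>
      induction z using TensorProduct.induction_on with
      | zero => simp [rho23, zero_mul, mul_zero]
      | add z₁ z₂ h₁ h₂ =>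
          simp only [rho23_add, map_add, add_mul, mul_add, Finset.sum_add_distrib, h₁, h₂]
      | tmul e f =>
          rw [show rho12 (a ⊗ₜ[k] b) = (a ⊗ₜ[k] b) ⊗ₜ[k] (1 : A) from rfl]
          rw [show rho13 (c ⊗ₜ[k] d) = (c ⊗ₜ[k] (1 : A)) ⊗ₜ[k] d from rfl]
          rw [show rho23 (e ⊗ₜ[k] f) = ((1 : A) ⊗ₜ[k] e) ⊗ₜ[k] f from rfl]
          rw [Algebra.TensorProduct.tmul_mul_tmul, Algebra.TensorProduct.tmul_mul_tmul,
            Algebra.TensorProduct.tmul_mul_tmul, Algebra.TensorProduct.tmul_mul_tmul]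
          simp only [pairG_tmul, mul_one, one_mul]
          have e' : ∀ (i : Fin n) (j : Fin m) (l : Fin p),
              F2 i a * G2 j b * (F1 i c * H2 l d) * (G1 j e * H1 l f)
                = (F1 i c * F2 i a) * (G1 j e * G2 j b) * (H1 l f * H2 l d) := by
            intros; ring
          simp_rw [e']
          rw [sum3_factor, hF, hG, hH, mul_assoc]


lemma dualForm_apply (ρ : A ⊗[k] A) (F G : Module.Dual k A) :
    dualForm ρ F G = pairG F G ρ := rfl

lemma dualCounit_apply (F : Module.Dual k A) : dualCounit k A F = F 1 := rfl

lemma pairG_comp (t t' : A →ₗ[k] A) (F G : Module.Dual k A) (x : A ⊗[k] A) :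
    pairG (F ∘ₗ t) (G ∘ₗ t') x = pairG F G (TensorProduct.map t t' x) := by
  induction x using TensorProduct.induction_on with
  | zero => simp
  | tmul a b => simp [pairG_tmul]
  | add x y hx hy => simp only [map_add, hx, hy]

lemma pairG_one (F G : Module.Dual k A) : pairG F G (1 : A ⊗[k] A) = F 1 * G 1 := by
  rw [Algebra.TensorProduct.one_def, pairG_tmul]

lemma opR_unopR (w : A ⊗[k] Aᵐᵒᵖ) :
    TensorProduct.map LinearMap.id (opL k A)
      (TensorProduct.map LinearMap.id (MulOpposite.opLinearEquiv k).symm.toLinearMap w) = w := by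
  induction w using TensorProduct.induction_on with
  | zero => simp
  | tmul a b => simp [opL]
  | add x y hx hy => simp only [map_add, hx, hy]

lemma opR_one_one :
    TensorProduct.map LinearMap.id (opL k A) ((1 : A) ⊗ₜ[k] (1 : A)) = (1 : A ⊗[k] Aᵐᵒᵖ) := by
  simp [opL, Algebra.TensorProduct.one_def]

lemma mapdual_eval (t : A →ₗ[k] A) (s : Module.Dual k A ⊗[k] Module.Dual k A) (a b : A) :
    TensorProduct.dualDistrib k A A (TensorProduct.map t.dualMap t.dualMap s) (a ⊗ₜ[k] b)
      = TensorProduct.dualDistrib k A A s (t a ⊗ₜ[k] t b) := by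
  induction s using TensorProduct.induction_on with
  | zero => simp
  | tmul F G => simp [TensorProduct.dualDistrib_apply]
  | add x y hx hy => simp only [map_add, LinearMap.add_apply, hx, hy]

lemma coalgAuto (t : A →ₗ[k] A) (ht : Function.Bijective t) (h1 : t 1 = 1)
    (hm : ∀ a b : A, t (a * b) = t a * t b) :
    IsCoalgAuto (dualComul k A) (dualCounit k A) t.dualMap := by
  refine ⟨(LinearEquiv.ofBijective t ht).dualMap.bijective, ?_, ?_⟩
  · intro F
    simp [dualCounit, h1]
  · apply LinearMap.ext; intro F
    apply (TensorProduct.dualDistribEquiv k A A).injective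
    apply TensorProduct.ext'
    intro a b
    rw [LinearMap.comp_apply, LinearMap.comp_apply, comul_eval,
      dualDistribEquiv_apply', mapdual_eval, ← dualDistribEquiv_apply', comul_eval]
    simp [hm]

lemma coalgAuto_inv (t : A →ₗ[k] A)
    (hA : IsCoalgAuto (dualComul k A) (dualCounit k A) t.dualMap) :
    t 1 = 1 ∧ ∀ a b : A, t (a * b) = t a * t b := by
  constructor
  · apply dual_sep (k := k)
    intro F
    simpa [dualCounit] using hA.2.1 F
  · intro a b
    apply dual_sep (k := k)
    intro F
    have h2 : dualComul k A (t.dualMap F)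
        = TensorProduct.map t.dualMap t.dualMap (dualComul k A F) := by
      have := LinearMap.congr_fun hA.2.2 F
      simpa using this
    calc F (t (a * b)) = (LinearMap.mul' k A).dualMap (t.dualMap F) (a ⊗ₜ[k] b) := by simp
      _ = TensorProduct.dualDistribEquiv k A A (dualComul k A (t.dualMap F)) (a ⊗ₜ[k] b) := by
          rw [comul_eval]
      _ = TensorProduct.dualDistrib k A A (dualComul k A F) (t a ⊗ₜ[k] t b) := by
          rw [h2, dualDistribEquiv_apply', mapdual_eval]
      _ = F (t a * t b) := by rw [← dualDistribEquiv_apply', comul_eval]; simp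

lemma exists_rho_of_form (β : Module.Dual k A →ₗ[k] Module.Dual k A →ₗ[k] k) :
    ∃ σ : A ⊗[k] A, ∀ F G, pairG F G σ = β F G := by
  refine ⟨(Module.evalEquiv k (A ⊗[k] A)).symm (TensorProduct.lift β ∘ₗ
    (TensorProduct.dualDistribEquiv k A A).symm.toLinearMap), fun F G => ?_⟩
  rw [show pairG F G ((Module.evalEquiv k (A ⊗[k] A)).symm _)
      = (TensorProduct.lift β ∘ₗ (TensorProduct.dualDistribEquiv k A A).symm.toLinearMap)
          (pairG F G) from Module.apply_evalEquiv_symm_apply k (A ⊗[k] A) _ _]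
  rw [LinearMap.comp_apply,
    show pairG F G = TensorProduct.dualDistribEquiv k A A (F ⊗ₜ[k] G) from rfl]
  rw [LinearEquiv.coe_coe, LinearEquiv.symm_apply_apply, TensorProduct.lift.tmul]


lemma opR_map (t : A →ₗ[k] A) (x : A ⊗[k] A) :
    TensorProduct.map LinearMap.id (opL k A) (TensorProduct.map LinearMap.id t x)
      = TensorProduct.map LinearMap.id (opL k A ∘ₗ t) x := by
  rw [show TensorProduct.map (LinearMap.id : A →ₗ[k] A) (opL k A ∘ₗ t)
      = (TensorProduct.map LinearMap.id (opL k A)).comp (TensorProduct.map LinearMap.id t) by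
    rw [← TensorProduct.map_comp, LinearMap.id_comp]]
  rfl

lemma opR_mapL (t : A →ₗ[k] A) (x : A ⊗[k] A) :
    TensorProduct.map LinearMap.id (opL k A) (TensorProduct.map t LinearMap.id x)
      = TensorProduct.map t (opL k A) x := by
  rw [show TensorProduct.map t (opL k A)
      = (TensorProduct.map LinearMap.id (opL k A)).comp (TensorProduct.map t LinearMap.id) by
    rw [← TensorProduct.map_comp, LinearMap.comp_id, LinearMap.id_comp]]
  rfl

lemma unopR_one :
    TensorProduct.map LinearMap.id (MulOpposite.opLinearEquiv k).symm.toLinearMap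
      (1 : A ⊗[k] Aᵐᵒᵖ) = (1 : A) ⊗ₜ[k] (1 : A) := by
  simp [Algebra.TensorProduct.one_def]

lemma pairG_comp_left (t : A →ₗ[k] A) (F G : Module.Dual k A) (x : A ⊗[k] A) :
    pairG (F ∘ₗ t) G x = pairG F G (TensorProduct.map t LinearMap.id x) := by
  induction x using TensorProduct.induction_on with
  | zero => simp
  | tmul a b => simp [pairG_tmul]
  | add x y hx hy => simp only [map_add, hx, hy]

lemma pairG_comp_right (t : A →ₗ[k] A) (F G : Module.Dual k A) (x : A ⊗[k] A) :
    pairG F (G ∘ₗ t) x = pairG F G (TensorProduct.map LinearMap.id t x) := by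
  induction x using TensorProduct.induction_on with
  | zero => simp
  | tmul a b => simp [pairG_tmul]
  | add x y hx hy => simp only [map_add, hx, hy]

end AlgAux

end Aux

/-- Duality: `(A, ρ, t_d, t_u)` is an oriented quantum algebra iff
`(A*, b_ρ, t_d*, t_u*)` is a strict oriented quantum coalgebra, for finite-dimensional `A`. -/
theorem oriented_quantum_algebra_iff_dual_strict_oriented_quantum_coalgebra
    {k A : Type*} [Field k] [Ring A] [Algebra k A] [FiniteDimensional k A]
    (ρ : A ⊗[k] A) (td tu : A →ₗ[k] A)
    (htd : Function.Bijective td) (htu : Function.Bijective tu)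
    (hcomm : td ∘ₗ tu = tu ∘ₗ td) :
    IsOrientedQuantumAlgebra ρ td tu ↔
      ∃ binv, IsStrictOrientedQuantumCoalgebra (dualComul k A) (dualCounit k A)
        (dualForm ρ) binv td.dualMap tu.dualMap := by
  constructor
  · rintro ⟨-, h1d, hmd, -, h1u, hmu, -, ρ', hρρ', hρ'ρ, hXY, hYX, hdd, huu, hybe⟩
    refine ⟨dualForm ρ', ?_, coalgAuto td htd h1d hmd, coalgAuto tu htu h1u hmu, ?_, ?_, ?_, ?_⟩
    · -- IsInverseForm
      intro F G n m F1 F2 G1 G2 hF hG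
      have eF : ∀ a b, ∑ i, F1 i a * F2 i b = F (a * b) := fun a b => comul_rep hF a b
      have eG : ∀ a b, ∑ j, G1 j a * G2 j b = G (a * b) := fun a b => comul_rep hG a b
      constructor
      · simp only [dualForm_apply, dualCounit_apply]
        rw [pair_mul eF eG ρ' ρ, hρ'ρ, pairG_one]
      · simp only [dualForm_apply, dualCounit_apply]
        rw [pair_mul eF eG ρ ρ', hρρ', pairG_one]
    · -- commuting dual maps
      rw [LinearMap.dualMap_comp_dualMap, LinearMap.dualMap_comp_dualMap, ← hcomm]
    · -- QC1
      intro F G n m F1 F2 G1 G2 hF hG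
      have eF : ∀ a b, ∑ i, F1 i a * F2 i b = F (a * b) := fun a b => comul_rep hF a b
      have eG : ∀ a b, ∑ j, G1 j a * G2 j b = G (a * b) := fun a b => comul_rep hG a b
      constructor
      · simp only [dualForm_apply, dualCounit_apply, LinearMap.dualMap_apply']
        simp_rw [pairG_comp_right tu, pairG_comp_left td]
        rw [pair_mulOp eF eG, opR_map, opR_mapL, hYX, unopR_one, pairG_tmul]
      · simp only [dualForm_apply, dualCounit_apply, LinearMap.dualMap_apply']
        simp_rw [pairG_comp_left td, pairG_comp_right tu]
        rw [pair_mulOp eF eG, opR_mapL, opR_map, hXY, unopR_one, pairG_tmul]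
    · -- QC2
      intro F G
      constructor
      · rw [dualForm_apply, dualForm_apply, LinearMap.dualMap_apply',
          LinearMap.dualMap_apply', pairG_comp, hdd]
      · rw [dualForm_apply, dualForm_apply, LinearMap.dualMap_apply',
          LinearMap.dualMap_apply', pairG_comp, huu]
    · -- QC3
      intro F G H n m p F1 F2 G1 G2 H1 H2 hF hG hH
      have eF : ∀ a b, ∑ i, F1 i a * F2 i b = F (a * b) := fun a b => comul_rep hF a b
      have eG : ∀ a b, ∑ j, G1 j a * G2 j b = G (a * b) := fun a b => comul_rep hG a b
      have eH : ∀ a b, ∑ l, H1 l a * H2 l b = H (a * b) := fun a b => comul_rep hH a b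
      simp only [dualForm_apply]
      rw [pair_ybe eF eG eH ρ ρ ρ, pair_ybe' eF eG eH ρ ρ ρ, hybe]
  · rintro ⟨binv, hinv, hAd, hAu, hTcomm, hqc1, hqc2, hqc3⟩
    obtain ⟨h1d, hmd⟩ := coalgAuto_inv td hAd
    obtain ⟨h1u, hmu⟩ := coalgAuto_inv tu hAu
    obtain ⟨ρ', hb⟩ := exists_rho_of_form binv
    refine ⟨htd, h1d, hmd, htu, h1u, hmu, hcomm, ρ', ?_, ?_, ?_, ?_, ?_, ?_, ?_⟩
    · -- ρ * ρ' = 1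
      apply pair_sep (k := k)
      intro F G
      obtain ⟨n, F1, F2, hF⟩ := exists_fin_rep (dualComul k A F)
      obtain ⟨m, G1, G2, hG⟩ := exists_fin_rep (dualComul k A G)
      have eF : ∀ a b, ∑ i, F1 i a * F2 i b = F (a * b) := fun a b => comul_rep hF a b
      have eG : ∀ a b, ∑ j, G1 j a * G2 j b = G (a * b) := fun a b => comul_rep hG a b
      have h := (hinv F G n m F1 F2 G1 G2 hF hG).2
      simp only [dualForm_apply, dualCounit_apply] at h
      rw [← pair_mul eF eG ρ ρ', pairG_one]
      simp_rw [hb]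
      exact h
    · -- ρ' * ρ = 1
      apply pair_sep (k := k)
      intro F G
      obtain ⟨n, F1, F2, hF⟩ := exists_fin_rep (dualComul k A F)
      obtain ⟨m, G1, G2, hG⟩ := exists_fin_rep (dualComul k A G)
      have eF : ∀ a b, ∑ i, F1 i a * F2 i b = F (a * b) := fun a b => comul_rep hF a b
      have eG : ∀ a b, ∑ j, G1 j a * G2 j b = G (a * b) := fun a b => comul_rep hG a b
      have h := (hinv F G n m F1 F2 G1 G2 hF hG).1
      simp only [dualForm_apply, dualCounit_apply] at h
      rw [← pair_mul eF eG ρ' ρ, pairG_one]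
      simp_rw [hb]
      exact h
    · -- map td opL ρ' * map id (opL ∘ tu) ρ = 1
      have key : TensorProduct.map LinearMap.id (MulOpposite.opLinearEquiv k).symm.toLinearMap
          (TensorProduct.map td (opL k A) ρ' * TensorProduct.map LinearMap.id (opL k A ∘ₗ tu) ρ)
            = (1 : A) ⊗ₜ[k] (1 : A) := by
        apply pair_sep (k := k)
        intro F G
        obtain ⟨n, F1, F2, hF⟩ := exists_fin_rep (dualComul k A F)
        obtain ⟨m, G1, G2, hG⟩ := exists_fin_rep (dualComul k A G)
        have eF : ∀ a b, ∑ i, F1 i a * F2 i b = F (a * b) := fun a b => comul_rep hF a b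
        have eG : ∀ a b, ∑ j, G1 j a * G2 j b = G (a * b) := fun a b => comul_rep hG a b
        have h := (hqc1 F G n m F1 F2 G1 G2 hF hG).2
        simp only [dualForm_apply, dualCounit_apply, LinearMap.dualMap_apply'] at h
        simp_rw [← hb, pairG_comp_left td, pairG_comp_right tu] at h
        rw [pair_mulOp eF eG] at h
        rw [← opR_mapL td ρ', ← opR_map tu ρ, pairG_tmul]
        exact h
      rw [← opR_unopR (TensorProduct.map td (opL k A) ρ'
          * TensorProduct.map LinearMap.id (opL k A ∘ₗ tu) ρ), key, opR_one_one]
    · -- map id (opL ∘ tu) ρ * map td opL ρ' = 1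
      have key : TensorProduct.map LinearMap.id (MulOpposite.opLinearEquiv k).symm.toLinearMap
          (TensorProduct.map LinearMap.id (opL k A ∘ₗ tu) ρ * TensorProduct.map td (opL k A) ρ')
            = (1 : A) ⊗ₜ[k] (1 : A) := by
        apply pair_sep (k := k)
        intro F G
        obtain ⟨n, F1, F2, hF⟩ := exists_fin_rep (dualComul k A F)
        obtain ⟨m, G1, G2, hG⟩ := exists_fin_rep (dualComul k A G)
        have eF : ∀ a b, ∑ i, F1 i a * F2 i b = F (a * b) := fun a b => comul_rep hF a b
        have eG : ∀ a b, ∑ j, G1 j a * G2 j b = G (a * b) := fun a b => comul_rep hG a b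
        have h := (hqc1 F G n m F1 F2 G1 G2 hF hG).1
        simp only [dualForm_apply, dualCounit_apply, LinearMap.dualMap_apply'] at h
        simp_rw [← hb, pairG_comp_left td, pairG_comp_right tu] at h
        rw [pair_mulOp eF eG] at h
        rw [← opR_map tu ρ, ← opR_mapL td ρ', pairG_tmul]
        exact h
      rw [← opR_unopR (TensorProduct.map LinearMap.id (opL k A ∘ₗ tu) ρ
          * TensorProduct.map td (opL k A) ρ'), key, opR_one_one]
    · -- (td ⊗ td) ρ = ρ
      apply pair_sep (k := k)
      intro F G
      have h := (hqc2 F G).1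
      simp only [dualForm_apply, LinearMap.dualMap_apply'] at h
      rw [pairG_comp] at h
      exact h
    · -- (tu ⊗ tu) ρ = ρ
      apply pair_sep (k := k)
      intro F G
      have h := (hqc2 F G).2
      simp only [dualForm_apply, LinearMap.dualMap_apply'] at h
      rw [pairG_comp] at h
      exact h
    · -- QYBE
      apply sep3 (k := k)
      intro F G H
      obtain ⟨n, F1, F2, hF⟩ := exists_fin_rep (dualComul k A F)
      obtain ⟨m, G1, G2, hG⟩ := exists_fin_rep (dualComul k A G)
      obtain ⟨p, H1, H2, hH⟩ := exists_fin_rep (dualComul k A H)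
      have eF : ∀ a b, ∑ i, F1 i a * F2 i b = F (a * b) := fun a b => comul_rep hF a b
      have eG : ∀ a b, ∑ j, G1 j a * G2 j b = G (a * b) := fun a b => comul_rep hG a b
      have eH : ∀ a b, ∑ l, H1 l a * H2 l b = H (a * b) := fun a b => comul_rep hH a b
      have h := hqc3 F G H n m p F1 F2 G1 G2 H1 H2 hF hG hH
      simp only [dualForm_apply] at h
      rw [pair_ybe eF eG eH ρ ρ ρ, pair_ybe' eF eG eH ρ ρ ρ] at h
      exact h
end

section
/- Let (A, ρ, t_d, t_u) be an oriented quantum algebra over k, and let ((𝒜, 𝝆, 𝐬, 𝐭_d, 𝐭_u), π) be the doubling construction with projection π onto the first factor. Suppose (A', ρ', s', t_d', t_u') satisfies: (A', ρ', s') is a quantum algebra, (A', ρ', t_d', t_u') is an oriented quantum algebra, t_d', t_u' commute with s', and t_d' ∘ t_u' = s'^{-2}. If f : (A', ρ', t_d', t_u') → (A, ρ, t_d, t_u) is a morphism of oriented quantum algebras, then there is a unique morphism F : A' → 𝒜 (compatible with all the structure, i.e., an algebra map with (F ⊗ F)(ρ') = 𝝆, 𝐬 ∘ F = F ∘ s',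 𝐭_d ∘ F = F ∘ t_d', 𝐭_u ∘ F = F ∘ t_u') such that π ∘ F = f; explicitly F(x) = f(x) ⊕ f(s'(x)). -/
open TensorProduct

/-- Auxiliary: `map` of composites, applied to an element. -/
theorem map_map_aux {k : Type*} [Field k] {M N P Q R S : Type*}
    [AddCommGroup M] [Module k M] [AddCommGroup N] [Module k N]
    [AddCommGroup P] [Module k P] [AddCommGroup Q] [Module k Q]
    [AddCommGroup R] [Module k R] [AddCommGroup S] [Module k S]
    (f₁ : M →ₗ[k] P) (g₁ : N →ₗ[k] Q) (f₂ : P →ₗ[k] R) (g₂ : Q →ₗ[k] S) (x : M ⊗[k] N) :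
    TensorProduct.map f₂ g₂ (TensorProduct.map f₁ g₁ x)
      = TensorProduct.map (f₂ ∘ₗ f₁) (g₂ ∘ₗ g₁) x := by
  rw [TensorProduct.map_comp]; rfl

/-- Auxiliary: `map f g` is multiplicative when `f`, `g` are. -/
theorem tpmap_mul_aux {k A B : Type*} [Field k] [Ring A] [Algebra k A] [Ring B] [Algebra k B]
    (f g : A →ₗ[k] B) (hf : ∀ x y, f (x * y) = f x * f y)
    (hg : ∀ x y, g (x * y) = g x * g y) (u v : A ⊗[k] A) :
    TensorProduct.map f g (u * v)
      = TensorProduct.map f g u * TensorProduct.map f g v := by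
  induction u using TensorProduct.induction_on with
  | zero => simp [zero_mul]
  | tmul a b =>
    induction v using TensorProduct.induction_on with
    | zero => simp [mul_zero]
    | tmul c d =>
      simp only [Algebra.TensorProduct.tmul_mul_tmul, TensorProduct.map_tmul, hf, hg]
    | add x y hx hy => rw [mul_add, map_add, hx, hy, map_add, mul_add]
  | add x y hx hy => rw [add_mul, map_add, hx, hy, map_add, add_mul]

/-- Universal (cofree) property of the doubling construction: given an object
`(A', ρ', s', sd, su)` of the category `𝒞_q` and a morphism of oriented quantum algebras
`f : (A', ρ', sd, su) → (A, ρ, t_d, t_u)`, the map `F(x) = f(x) ⊕ f(s'(x))` is the unique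
morphism `F : (A', ρ', s', sd, su) → (𝒜, 𝝆, 𝐬, 𝐭_d, 𝐭_u)` with `π ∘ F = f`. -/
theorem doubling_universal_property {k A A' : Type*} [Field k] [Ring A] [Algebra k A]
    [Ring A'] [Algebra k A']
    (ρ ρinv : A ⊗[k] A) (td tu td' tu' : A →ₗ[k] A)
    (h : IsOrientedQuantumAlgebra ρ td tu)
    (hρ1 : ρ * ρinv = 1) (hρ2 : ρinv * ρ = 1)
    (htd1 : td ∘ₗ td' = LinearMap.id) (htd2 : td' ∘ₗ td = LinearMap.id)
    (htu1 : tu ∘ₗ tu' = LinearMap.id) (htu2 : tu' ∘ₗ tu = LinearMap.id)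
    (ρ' : A' ⊗[k] A') (s' sd su : A' →ₗ[k] A')
    (hQA : IsQuantumAlgebra ρ' s')
    (hOQA : IsOrientedQuantumAlgebra ρ' sd su)
    (hcs1 : sd ∘ₗ s' = s' ∘ₗ sd) (hcs2 : su ∘ₗ s' = s' ∘ₗ su)
    (hs2 : (sd ∘ₗ su) ∘ₗ (s' ∘ₗ s') = LinearMap.id)
    (hs2' : (s' ∘ₗ s') ∘ₗ (sd ∘ₗ su) = LinearMap.id)
    (f : A' →ₗ[k] A)
    (hf1 : ∀ x y : A', f (x * y) = f x * f y) (hf2 : f 1 = 1)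
    (hf3 : TensorProduct.map f f ρ' = ρ)
    (hf4 : td ∘ₗ f = f ∘ₗ sd) (hf5 : tu ∘ₗ f = f ∘ₗ su) :
    ((∀ x y : A', (LinearMap.prod f (opL k A ∘ₗ f ∘ₗ s')) (x * y)
        = (LinearMap.prod f (opL k A ∘ₗ f ∘ₗ s')) x * (LinearMap.prod f (opL k A ∘ₗ f ∘ₗ s')) y) ∧
      (LinearMap.prod f (opL k A ∘ₗ f ∘ₗ s')) 1 = 1 ∧
      TensorProduct.map (LinearMap.prod f (opL k A ∘ₗ f ∘ₗ s'))
          (LinearMap.prod f (opL k A ∘ₗ f ∘ₗ s')) ρ' = doubleRho ρ ρinv td' tu' ∧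
      doubleS td' tu' ∘ₗ (LinearMap.prod f (opL k A ∘ₗ f ∘ₗ s'))
        = (LinearMap.prod f (opL k A ∘ₗ f ∘ₗ s')) ∘ₗ s' ∧
      doubleT td ∘ₗ (LinearMap.prod f (opL k A ∘ₗ f ∘ₗ s'))
        = (LinearMap.prod f (opL k A ∘ₗ f ∘ₗ s')) ∘ₗ sd ∧
      doubleT tu ∘ₗ (LinearMap.prod f (opL k A ∘ₗ f ∘ₗ s'))
        = (LinearMap.prod f (opL k A ∘ₗ f ∘ₗ s')) ∘ₗ su ∧
      LinearMap.fst k A Aᵐᵒᵖ ∘ₗ (LinearMap.prod f (opL k A ∘ₗ f ∘ₗ s')) = f) ∧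
    (∀ F : A' →ₗ[k] A × Aᵐᵒᵖ,
      ((∀ x y : A', F (x * y) = F x * F y) ∧ F 1 = 1 ∧
        TensorProduct.map F F ρ' = doubleRho ρ ρinv td' tu' ∧
        doubleS td' tu' ∘ₗ F = F ∘ₗ s' ∧
        doubleT td ∘ₗ F = F ∘ₗ sd ∧ doubleT tu ∘ₗ F = F ∘ₗ su ∧
        LinearMap.fst k A Aᵐᵒᵖ ∘ₗ F = f) →
      F = LinearMap.prod f (opL k A ∘ₗ f ∘ₗ s')) := by
  obtain ⟨hs'bij, hs'1, hs'anti, hq1, hq2, hq3, -⟩ := hQA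
  obtain ⟨-, -, -, -, -, -, htdtu, -⟩ := h
  -- pointwise inverse facts
  have htd2' : ∀ a, td' (td a) = a := fun a => by
    have := DFunLike.congr_fun htd2 a; simpa using this
  have htu2' : ∀ a, tu' (tu a) = a := fun a => by
    have := DFunLike.congr_fun htu2 a; simpa using this
  have hcomm : ∀ a, td (tu a) = tu (td a) := fun a => by
    have := DFunLike.congr_fun htdtu a; simpa using this
  -- key identity: td' ∘ tu' ∘ f = f ∘ s' ∘ s'
  have htt : ∀ x : A', td' (tu' (f x)) = f (s' (s' x)) := by
    intro x
    have key : td (tu (f (s' (s' x)))) = f x := by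
      have h5 := DFunLike.congr_fun hf5 (s' (s' x))
      have h4 := DFunLike.congr_fun hf4 (su (s' (s' x)))
      have hid := DFunLike.congr_fun hs2 x
      simp only [LinearMap.comp_apply, LinearMap.id_apply] at h5 h4 hid
      rw [h5, h4, hid]
    calc td' (tu' (f x)) = td' (tu' (td (tu (f (s' (s' x)))))) := by rw [key]
      _ = td' (tu' (tu (td (f (s' (s' x)))))) := by rw [hcomm]
      _ = td' (td (f (s' (s' x)))) := by rw [htu2']
      _ = f (s' (s' x)) := htd2' _
  -- map f f is multiplicative and unital
  have hmul := tpmap_mul_aux f f hf1 hf1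
  have hone : TensorProduct.map f f (1 : A' ⊗[k] A') = 1 := by
    rw [Algebra.TensorProduct.one_def, TensorProduct.map_tmul, hf2,
      Algebra.TensorProduct.one_def]
  -- ρinv is the image of (s' ⊗ 1)(ρ')
  have hXeq : TensorProduct.map f f (TensorProduct.map s' LinearMap.id ρ')
      = TensorProduct.map (f ∘ₗ s') f ρ' := by
    rw [map_map_aux, LinearMap.comp_id]
  have hinvX : TensorProduct.map (f ∘ₗ s') f ρ' = ρinv := by
    have e1 : ρ * TensorProduct.map (f ∘ₗ s') f ρ' = 1 := by
      rw [← hXeq, ← hf3, ← hmul, hq1, hone]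
    calc TensorProduct.map (f ∘ₗ s') f ρ'
        = (ρinv * ρ) * TensorProduct.map (f ∘ₗ s') f ρ' := by rw [hρ2, one_mul]
      _ = ρinv * (ρ * TensorProduct.map (f ∘ₗ s') f ρ') := mul_assoc _ _ _
      _ = ρinv := by rw [e1, mul_one]
  -- decomposition of F
  have hFdecomp : LinearMap.prod f (opL k A ∘ₗ f ∘ₗ s')
      = inlA k A ∘ₗ f + inrA k A ∘ₗ (f ∘ₗ s') := by
    apply LinearMap.ext; intro x
    simp [inlA, inrA, opL, Prod.ext_iff]
  refine ⟨⟨?_, ?_, ?_, ?_, ?_, ?_, ?_⟩, ?_⟩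
  · -- multiplicativity
    intro x y
    simp only [LinearMap.prod_apply, LinearMap.comp_apply, opL,
      LinearEquiv.coe_coe, MulOpposite.coe_opLinearEquiv, Function.prod, Prod.mk_mul_mk]
    refine Prod.ext (hf1 x y) ?_
    simp only [hs'anti x y, hf1, ← MulOpposite.op_mul]
  · -- unit
    simp only [LinearMap.prod_apply, LinearMap.comp_apply, opL,
      LinearEquiv.coe_coe, MulOpposite.coe_opLinearEquiv, Function.prod, hs'1, hf2]
    rfl
  · -- the form
    rw [hFdecomp, TensorProduct.map_add_left, TensorProduct.map_add_right,
      TensorProduct.map_add_right, LinearMap.add_apply, LinearMap.add_apply,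
      LinearMap.add_apply]
    have t1 : TensorProduct.map (inlA k A ∘ₗ f) (inlA k A ∘ₗ f) ρ'
        = TensorProduct.map (inlA k A) (inlA k A) ρ := by
      rw [← hf3, map_map_aux]
    have t4 : TensorProduct.map (inrA k A ∘ₗ (f ∘ₗ s')) (inrA k A ∘ₗ (f ∘ₗ s')) ρ'
        = TensorProduct.map (inrA k A) (inrA k A) ρ := by
      have : TensorProduct.map (f ∘ₗ s') (f ∘ₗ s') ρ' = ρ := by
        rw [← map_map_aux, hq3, hf3]
      rw [← this, map_map_aux]
    have t3 : TensorProduct.map (inrA k A ∘ₗ (f ∘ₗ s')) (inlA k A ∘ₗ f) ρ'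
        = TensorProduct.map (inrA k A) (inlA k A) ρinv := by
      rw [← hinvX, map_map_aux]
    have t2 : TensorProduct.map (inlA k A ∘ₗ f) (inrA k A ∘ₗ (f ∘ₗ s')) ρ'
        = TensorProduct.map (inlA k A) (inrA k A ∘ₗ td' ∘ₗ tu') ρinv := by
      have c2 : (inrA k A ∘ₗ (f ∘ₗ s')) ∘ₗ s' = (inrA k A ∘ₗ td' ∘ₗ tu') ∘ₗ f := by
        apply LinearMap.ext; intro x
        simp only [LinearMap.comp_apply]
        exact congrArg _ (htt x).symm
      calc TensorProduct.map (inlA k A ∘ₗ f) (inrA k A ∘ₗ (f ∘ₗ s')) ρ'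
          = TensorProduct.map (inlA k A ∘ₗ f) (inrA k A ∘ₗ (f ∘ₗ s'))
              (TensorProduct.map s' s' ρ') := by rw [hq3]
        _ = TensorProduct.map ((inlA k A ∘ₗ f) ∘ₗ s')
              ((inrA k A ∘ₗ (f ∘ₗ s')) ∘ₗ s') ρ' := map_map_aux _ _ _ _ _
        _ = TensorProduct.map (inlA k A ∘ₗ (f ∘ₗ s'))
              ((inrA k A ∘ₗ td' ∘ₗ tu') ∘ₗ f) ρ' := by
            rw [c2, LinearMap.comp_assoc]
        _ = TensorProduct.map (inlA k A) (inrA k A ∘ₗ td' ∘ₗ tu')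
              (TensorProduct.map (f ∘ₗ s') f ρ') := (map_map_aux _ _ _ _ _).symm
        _ = TensorProduct.map (inlA k A) (inrA k A ∘ₗ td' ∘ₗ tu') ρinv := by rw [hinvX]
    rw [t1, t2, t3, t4, doubleRho]
    abel
  · -- compatibility with s
    apply LinearMap.ext; intro x
    simp only [LinearMap.comp_apply, LinearMap.prod_apply, Function.prod, doubleS, opL,
      LinearEquiv.coe_coe, MulOpposite.coe_opLinearEquiv,
      MulOpposite.coe_opLinearEquiv_symm, LinearMap.fst_apply, LinearMap.snd_apply,
      MulOpposite.unop_op]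
    exact Prod.ext rfl (congrArg MulOpposite.op (htt x))
  · -- compatibility with td
    apply LinearMap.ext; intro x
    have h4 := DFunLike.congr_fun hf4 x
    have h4' := DFunLike.congr_fun hf4 (s' x)
    have hc := DFunLike.congr_fun hcs1 x
    simp only [LinearMap.comp_apply] at h4 h4' hc
    simp only [LinearMap.comp_apply, LinearMap.prod_apply, Function.prod, doubleT, opL,
      LinearMap.prodMap_apply, LinearEquiv.coe_coe, MulOpposite.coe_opLinearEquiv,
      MulOpposite.coe_opLinearEquiv_symm, MulOpposite.unop_op]
    refine Prod.ext h4 (congrArg MulOpposite.op ?_)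
    rw [h4', hc]
  · -- compatibility with tu
    apply LinearMap.ext; intro x
    have h5 := DFunLike.congr_fun hf5 x
    have h5' := DFunLike.congr_fun hf5 (s' x)
    have hc := DFunLike.congr_fun hcs2 x
    simp only [LinearMap.comp_apply] at h5 h5' hc
    simp only [LinearMap.comp_apply, LinearMap.prod_apply, Function.prod, doubleT, opL,
      LinearMap.prodMap_apply, LinearEquiv.coe_coe, MulOpposite.coe_opLinearEquiv,
      MulOpposite.coe_opLinearEquiv_symm, MulOpposite.unop_op]
    refine Prod.ext h5 (congrArg MulOpposite.op ?_)
    rw [h5', hc]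
  · -- projection
    apply LinearMap.ext; intro x
    simp [LinearMap.prod_apply]
  · -- uniqueness
    rintro F ⟨-, -, -, hS, -, -, hπ⟩
    apply LinearMap.ext; intro x
    have h1 : (F x).1 = f x := by
      have := DFunLike.congr_fun hπ x; simpa using this
    have hfs : (F (s' x)).1 = f (s' x) := by
      have := DFunLike.congr_fun hπ (s' x); simpa using this
    have h2 : (F x).2 = MulOpposite.op (f (s' x)) := by
      have hSx := DFunLike.congr_fun hS x
      simp only [LinearMap.comp_apply] at hSx
      have := congrArg Prod.fst hSx
      simp only [doubleS, LinearMap.prod_apply, Function.prod, LinearMap.comp_apply,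
        LinearEquiv.coe_coe, MulOpposite.coe_opLinearEquiv_symm,
        LinearMap.snd_apply] at this
      rw [hfs] at this
      rw [← this, MulOpposite.op_unop]
    rw [LinearMap.prod_apply]
    exact Prod.ext h1 (by simpa [opL] using h2)
end

section
/- If (C, b, T_d, T_u) is an oriented quantum coalgebra over a field k, then (C, b^{-1}, T_d^{-1}, T_u^{-1}) is an oriented quantum coalgebra over k. -/
open TensorProduct

namespace OQCProof

open Coalgebra

variable {k : Type*} [Field k]

section Pairing

variable {A M N M' N' : Type*} [AddCommGroup A] [Module k A]
  [AddCommGroup M] [Module k M] [AddCommGroup N] [Module k N]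
  [AddCommGroup M'] [Module k M'] [AddCommGroup N'] [Module k N']

/-- The pairing of two `A`-valued forms, as a form on tensor products. -/
noncomputable def pairing (m : A →ₗ[k] A →ₗ[k] A)
    (β : M →ₗ[k] M' →ₗ[k] A) (γ : N →ₗ[k] N' →ₗ[k] A) :
    (M ⊗[k] N) →ₗ[k] (M' ⊗[k] N') →ₗ[k] A :=
  TensorProduct.curry (TensorProduct.lift m ∘ₗ
    TensorProduct.map (TensorProduct.lift β) (TensorProduct.lift γ) ∘ₗ
    (TensorProduct.tensorTensorTensorComm k M N M' N').toLinearMap)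

@[simp] lemma pairing_tmul (m : A →ₗ[k] A →ₗ[k] A)
    (β : M →ₗ[k] M' →ₗ[k] A) (γ : N →ₗ[k] N' →ₗ[k] A)
    (x : M) (y : N) (x' : M') (y' : N') :
    pairing m β γ (x ⊗ₜ[k] y) (x' ⊗ₜ[k] y') = m (β x x') (γ y y') := by
  simp [pairing]

lemma exists_fin_decomp (t : M ⊗[k] N) :
    ∃ (n : ℕ) (a : Fin n → M) (b : Fin n → N), t = ∑ i, a i ⊗ₜ[k] b i := by
  obtain ⟨S, hS⟩ := TensorProduct.exists_finset t
  refine ⟨S.card, fun i => ((S.equivFin.symm i : S) : M × N).1,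
    fun i => ((S.equivFin.symm i : S) : M × N).2, ?_⟩
  rw [hS, ← Finset.sum_attach S (fun p => p.1 ⊗ₜ[k] p.2)]
  exact (Equiv.sum_comp S.equivFin.symm (fun p : S => (p : M × N).1 ⊗ₜ[k] (p : M × N).2)).symm

end Pairing

section Conv

variable {C : Type*} [AddCommGroup C] [Module k C] [Coalgebra k C]
variable {A : Type*} [AddCommGroup A] [Module k A]

/-- Convolution of `A`-valued bilinear forms on a coalgebra. -/
noncomputable def conv (m : A →ₗ[k] A →ₗ[k] A) (β γ : C →ₗ[k] C →ₗ[k] A) :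
    C →ₗ[k] C →ₗ[k] A :=
  (pairing m β γ).compl₁₂ comul comul

lemma conv_apply (m : A →ₗ[k] A →ₗ[k] A) (β γ : C →ₗ[k] C →ₗ[k] A) (c d : C) :
    conv m β γ c d = pairing m β γ (comul c) (comul d) := rfl

lemma conv_eq (m : A →ₗ[k] A →ₗ[k] A) (β γ : C →ₗ[k] C →ₗ[k] A) {c d : C}
    {n p : ℕ} {c1 c2 : Fin n → C} {d1 d2 : Fin p → C}
    (hc : Coalgebra.comul (R := k) c = ∑ i, c1 i ⊗ₜ[k] c2 i)
    (hd : Coalgebra.comul (R := k) d = ∑ j, d1 j ⊗ₜ[k] d2 j) :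
    conv m β γ c d = ∑ i, ∑ j, m (β (c1 i) (d1 j)) (γ (c2 i) (d2 j)) := by
  rw [conv_apply, hc, hd]
  simp [map_sum, LinearMap.sum_apply]
  exact Finset.sum_comm

lemma sum_counit_smul_left {n : ℕ} {c : C} {c1 c2 : Fin n → C}
    (hc : Coalgebra.comul (R := k) c = ∑ i, c1 i ⊗ₜ[k] c2 i) :
    ∑ i, Coalgebra.counit (R := k) (c1 i) • c2 i = c := by
  have h := Coalgebra.rTensor_counit_comul (R := k) c
  rw [hc] at h
  have h2 := congrArg (TensorProduct.lid k C) h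
  simpa [map_sum] using h2

lemma sum_counit_smul_right {n : ℕ} {c : C} {c1 c2 : Fin n → C}
    (hc : Coalgebra.comul (R := k) c = ∑ i, c1 i ⊗ₜ[k] c2 i) :
    ∑ i, Coalgebra.counit (R := k) (c2 i) • c1 i = c := by
  have h := Coalgebra.lTensor_counit_comul (R := k) c
  rw [hc] at h
  have h2 := congrArg (TensorProduct.rid k C) h
  simpa [map_sum] using h2

variable {V : Type*} [AddCommGroup V] [Module k V]

lemma sum_counit_apply_left {n : ℕ} {c : C} {c1 c2 : Fin n → C}
    (φ : C →ₗ[k] V)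
    (hc : Coalgebra.comul (R := k) c = ∑ i, c1 i ⊗ₜ[k] c2 i) :
    ∑ i, Coalgebra.counit (R := k) (c1 i) • φ (c2 i) = φ c := by
  have := congrArg φ (sum_counit_smul_left hc)
  simpa [map_sum] using this

lemma sum_counit_apply_right {n : ℕ} {c : C} {c1 c2 : Fin n → C}
    (φ : C →ₗ[k] V)
    (hc : Coalgebra.comul (R := k) c = ∑ i, c1 i ⊗ₜ[k] c2 i) :
    ∑ i, Coalgebra.counit (R := k) (c2 i) • φ (c1 i) = φ c := by
  have := congrArg φ (sum_counit_smul_right hc)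
  simpa [map_sum] using this

end Conv

end OQCProof

namespace OQCProof

open Coalgebra

variable {k : Type*} [Field k]
variable {C : Type*} [AddCommGroup C] [Module k C] [Coalgebra k C]
variable {A : Type*} [AddCommGroup A] [Module k A]

lemma conv_assoc (m : A →ₗ[k] A →ₗ[k] A)
    (hm : ∀ x y z : A, m (m x y) z = m x (m y z)) (β γ δ : C →ₗ[k] C →ₗ[k] A) :
    conv m (conv m β γ) δ = conv m β (conv m γ δ) := by
  have L1 : pairing m (conv m β γ) δ =
      (pairing m (pairing m β γ) δ).compl₁₂
        ((Coalgebra.comul (R := k)).rTensor C) ((Coalgebra.comul (R := k)).rTensor C) := by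
    ext c₁ c₂ d₁ d₂
    simp [conv, conv_apply, LinearMap.compl₁₂_apply]
  have L2 : pairing m β (conv m γ δ) =
      (pairing m β (pairing m γ δ)).compl₁₂
        ((Coalgebra.comul (R := k)).lTensor C) ((Coalgebra.comul (R := k)).lTensor C) := by
    ext c₁ c₂ d₁ d₂
    simp [conv, conv_apply, LinearMap.compl₁₂_apply]
  have L3 : (pairing m β (pairing m γ δ)).compl₁₂
      (TensorProduct.assoc k C C C).toLinearMap (TensorProduct.assoc k C C C).toLinearMap
      = pairing m (pairing m β γ) δ := by
    ext c₁ c₂ c₃ d₁ d₂ d₃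
    simp [LinearMap.compl₁₂_apply, hm]
  ext c d
  show pairing m (conv m β γ) δ (comul c) (comul d)
      = pairing m β (conv m γ δ) (comul c) (comul d)
  rw [L1, L2]
  simp only [LinearMap.compl₁₂_apply]
  rw [← Coalgebra.coassoc_apply c, ← Coalgebra.coassoc_apply d, ← L3]
  simp [LinearMap.compl₁₂_apply]

/-- The unit bilinear form `(c, d) ↦ (ε c * ε d) • u`. -/
noncomputable def Eform (u : A) : C →ₗ[k] C →ₗ[k] A :=
  (((LinearMap.mul k k).compl₁₂ (Coalgebra.counit (R := k))
      (Coalgebra.counit (R := k)))).compr₂ (LinearMap.toSpanSingleton k A u)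

@[simp] lemma Eform_apply (u : A) (c d : C) :
    Eform (k := k) u c d = (Coalgebra.counit (R := k) c * Coalgebra.counit (R := k) d) • u := rfl

lemma conv_Eform_left (m : A →ₗ[k] A →ₗ[k] A) (u : A)
    (hu : ∀ x, m u x = x) (β : C →ₗ[k] C →ₗ[k] A) :
    conv m (Eform u) β = β := by
  ext c d
  obtain ⟨n, c1, c2, hc⟩ := exists_fin_decomp (Coalgebra.comul (R := k) c)
  obtain ⟨p, d1, d2, hd⟩ := exists_fin_decomp (Coalgebra.comul (R := k) d)
  rw [conv_eq m _ _ hc hd]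
  have : ∀ i j, m (Eform (k := k) u (c1 i) (d1 j)) (β (c2 i) (d2 j))
      = counit (R := k) (c1 i) • (counit (R := k) (d1 j) • β (c2 i) (d2 j)) := by
    intro i j
    simp [mul_smul, map_smul, hu]
  simp_rw [this]
  have h1 : ∀ i, ∑ j, counit (R := k) (d1 j) • β (c2 i) (d2 j) = β (c2 i) d :=
    fun i => sum_counit_apply_left (β (c2 i)) hd
  rw [Finset.sum_congr rfl fun i _ => by rw [← Finset.smul_sum, h1 i]]
  exact sum_counit_apply_left (β.flip d) hc

lemma conv_Eform_right (m : A →ₗ[k] A →ₗ[k] A) (u : A)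
    (hu : ∀ x, m x u = x) (β : C →ₗ[k] C →ₗ[k] A) :
    conv m β (Eform u) = β := by
  ext c d
  obtain ⟨n, c1, c2, hc⟩ := exists_fin_decomp (Coalgebra.comul (R := k) c)
  obtain ⟨p, d1, d2, hd⟩ := exists_fin_decomp (Coalgebra.comul (R := k) d)
  rw [conv_eq m _ _ hc hd]
  have : ∀ i j, m (β (c1 i) (d1 j)) (Eform (k := k) u (c2 i) (d2 j))
      = counit (R := k) (c2 i) • (counit (R := k) (d2 j) • β (c1 i) (d1 j)) := by
    intro i j
    rw [Eform_apply, map_smul, hu, mul_smul, smul_comm]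
  simp_rw [this]
  have h1 : ∀ i, ∑ j, counit (R := k) (d2 j) • β (c1 i) (d1 j) = β (c1 i) d :=
    fun i => sum_counit_apply_right (β (c1 i)) hd
  rw [Finset.sum_congr rfl fun i _ => by rw [← Finset.smul_sum, h1 i]]
  exact sum_counit_apply_right (β.flip d) hc

lemma conv_inv_unique (m : A →ₗ[k] A →ₗ[k] A) (u : A)
    (hm : ∀ x y z : A, m (m x y) z = m x (m y z))
    (hul : ∀ x, m u x = x) (hur : ∀ x, m x u = x)
    {x y z : C →ₗ[k] C →ₗ[k] A}
    (hxy : conv m x y = Eform u) (hyz : conv m y z = Eform u) : x = z := by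
  have h1 : conv m x (conv m y z) = x := by rw [hyz, conv_Eform_right m u hur]
  rw [← h1, ← conv_assoc m hm, hxy, conv_Eform_left m u hul]

end OQCProof

namespace OQCProof

open Coalgebra

variable {k : Type*} [Field k]
variable {C : Type*} [AddCommGroup C] [Module k C] [Coalgebra k C]

/-- Convolution product on the dual of a coalgebra. -/
noncomputable def dmul : Module.Dual k C →ₗ[k] Module.Dual k C →ₗ[k] Module.Dual k C :=
  LinearMap.mk₂ k
    (fun F G => TensorProduct.uncurry (RingHom.id k) C C k ((LinearMap.mul k k).compl₁₂ F G) ∘ₗ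
      Coalgebra.comul)
    (fun F F' G => by
      have : (LinearMap.mul k k).compl₁₂ (F + F') G
          = (LinearMap.mul k k).compl₁₂ F G + (LinearMap.mul k k).compl₁₂ F' G := by
        ext x y
        simp only [LinearMap.compl₁₂_apply, LinearMap.add_apply, LinearMap.smul_apply,
          LinearMap.mul_apply', smul_eq_mul]
        ring
      rw [this, map_add, LinearMap.add_comp])
    (fun a F G => by
      have : (LinearMap.mul k k).compl₁₂ (a • F) G
          = a • (LinearMap.mul k k).compl₁₂ F G := by
        ext x y
        simp only [LinearMap.compl₁₂_apply, LinearMap.add_apply, LinearMap.smul_apply,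
          LinearMap.mul_apply', smul_eq_mul]
        ring
      rw [this, map_smul, LinearMap.smul_comp])
    (fun F G G' => by
      have : (LinearMap.mul k k).compl₁₂ F (G + G')
          = (LinearMap.mul k k).compl₁₂ F G + (LinearMap.mul k k).compl₁₂ F G' := by
        ext x y
        simp only [LinearMap.compl₁₂_apply, LinearMap.add_apply, LinearMap.smul_apply,
          LinearMap.mul_apply', smul_eq_mul]
        ring
      rw [this, map_add, LinearMap.add_comp])
    (fun a F G => by
      have : (LinearMap.mul k k).compl₁₂ F (a • G)
          = a • (LinearMap.mul k k).compl₁₂ F G := by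
        ext x y
        simp only [LinearMap.compl₁₂_apply, LinearMap.add_apply, LinearMap.smul_apply,
          LinearMap.mul_apply', smul_eq_mul]
        ring
      rw [this, map_smul, LinearMap.smul_comp])

lemma dmul_apply (F G : Module.Dual k C) (x : C) :
    dmul F G x = TensorProduct.uncurry (RingHom.id k) C C k
      ((LinearMap.mul k k).compl₁₂ F G) (Coalgebra.comul (R := k) x) := rfl

lemma dmul_eq (F G : Module.Dual k C) {x : C} {n : ℕ} {x1 x2 : Fin n → C}
    (hx : Coalgebra.comul (R := k) x = ∑ i, x1 i ⊗ₜ[k] x2 i) :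
    dmul F G x = ∑ i, F (x1 i) * G (x2 i) := by
  rw [dmul_apply, hx]
  simp [map_sum]

lemma dmul_assoc (F G H : Module.Dual k C) :
    dmul (dmul F G) H = dmul F (dmul G H) := by
  have L1 : TensorProduct.uncurry (RingHom.id k) C C k ((LinearMap.mul k k).compl₁₂ (dmul F G) H)
      = TensorProduct.uncurry (RingHom.id k) (C ⊗[k] C) C k
          ((LinearMap.mul k k).compl₁₂
            (TensorProduct.uncurry (RingHom.id k) C C k ((LinearMap.mul k k).compl₁₂ F G)) H) ∘ₗ
        ((Coalgebra.comul (R := k)).rTensor C) := by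
    ext a c
    simp [LinearMap.compl₁₂_apply, dmul_apply]
  have L2 : TensorProduct.uncurry (RingHom.id k) C C k ((LinearMap.mul k k).compl₁₂ F (dmul G H))
      = TensorProduct.uncurry (RingHom.id k) C (C ⊗[k] C) k
          ((LinearMap.mul k k).compl₁₂ F
            (TensorProduct.uncurry (RingHom.id k) C C k ((LinearMap.mul k k).compl₁₂ G H))) ∘ₗ
        ((Coalgebra.comul (R := k)).lTensor C) := by
    ext a c
    simp [LinearMap.compl₁₂_apply, dmul_apply]
  have L3 : (TensorProduct.uncurry (RingHom.id k) C (C ⊗[k] C) k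
          ((LinearMap.mul k k).compl₁₂ F
            (TensorProduct.uncurry (RingHom.id k) C C k ((LinearMap.mul k k).compl₁₂ G H)))) ∘ₗ
        (TensorProduct.assoc k C C C).toLinearMap
      = TensorProduct.uncurry (RingHom.id k) (C ⊗[k] C) C k
          ((LinearMap.mul k k).compl₁₂
            (TensorProduct.uncurry (RingHom.id k) C C k ((LinearMap.mul k k).compl₁₂ F G)) H) := by
    ext a b c
    simp [LinearMap.compl₁₂_apply, mul_assoc]
  ext x
  show TensorProduct.uncurry (RingHom.id k) C C k ((LinearMap.mul k k).compl₁₂ (dmul F G) H) (comul x)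
    = TensorProduct.uncurry (RingHom.id k) C C k ((LinearMap.mul k k).compl₁₂ F (dmul G H)) (comul x)
  rw [L1, L2]
  simp only [LinearMap.comp_apply]
  rw [← Coalgebra.coassoc_apply x, ← L3]
  simp

lemma dmul_counit_left (F : Module.Dual k C) : dmul Coalgebra.counit F = F := by
  ext x
  obtain ⟨n, x1, x2, hx⟩ := exists_fin_decomp (Coalgebra.comul (R := k) x)
  rw [dmul_eq _ _ hx]
  simpa [smul_eq_mul] using sum_counit_apply_left F hx

lemma dmul_counit_right (F : Module.Dual k C) : dmul F Coalgebra.counit = F := by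
  ext x
  obtain ⟨n, x1, x2, hx⟩ := exists_fin_decomp (Coalgebra.comul (R := k) x)
  rw [dmul_eq _ _ hx]
  have := sum_counit_apply_right F hx
  simp only [smul_eq_mul] at this
  rw [← this]
  exact Finset.sum_congr rfl fun i _ => mul_comm _ _

end OQCProof

namespace OQCProof

open Coalgebra

variable {k : Type*} [Field k]
variable {C : Type*} [AddCommGroup C] [Module k C] [Coalgebra k C]

/-- `(c,d,e) ↦ β c d * ε e` as a `Dual`-valued bilinear form. -/
noncomputable def F12 (β : C →ₗ[k] C →ₗ[k] k) : C →ₗ[k] C →ₗ[k] Module.Dual k C :=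
  β.compr₂ (LinearMap.toSpanSingleton k (Module.Dual k C) (Coalgebra.counit (R := k)))

@[simp] lemma F12_apply (β : C →ₗ[k] C →ₗ[k] k) (c d e : C) :
    F12 β c d e = β c d * Coalgebra.counit (R := k) e := by
  simp [F12, LinearMap.toSpanSingleton_apply, smul_eq_mul]

/-- `(c,d,e) ↦ β c e * ε d`. -/
noncomputable def F13 (β : C →ₗ[k] C →ₗ[k] k) : C →ₗ[k] C →ₗ[k] Module.Dual k C :=
  LinearMap.mk₂ k (fun c d => Coalgebra.counit (R := k) d • β c)
    (fun c c' d => by simp [map_add, smul_add])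
    (fun a c d => by simp [map_smul, smul_smul, mul_comm])
    (fun c d d' => by simp [map_add, add_smul])
    (fun a c d => by simp [map_smul, smul_smul, mul_comm])

@[simp] lemma F13_apply (β : C →ₗ[k] C →ₗ[k] k) (c d e : C) :
    F13 β c d e = β c e * Coalgebra.counit (R := k) d := by
  simp [F13, LinearMap.mk₂_apply, smul_eq_mul, mul_comm]

/-- `(c,d,e) ↦ ε c * β d e`. -/
noncomputable def F23 (β : C →ₗ[k] C →ₗ[k] k) : C →ₗ[k] C →ₗ[k] Module.Dual k C :=
  LinearMap.mk₂ k (fun c d => Coalgebra.counit (R := k) c • β d)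
    (fun c c' d => by simp [map_add, add_smul])
    (fun a c d => by simp [map_smul, smul_smul, mul_comm])
    (fun c d d' => by simp [map_add, smul_add])
    (fun a c d => by simp [map_smul, smul_smul, mul_comm])

@[simp] lemma F23_apply (β : C →ₗ[k] C →ₗ[k] k) (c d e : C) :
    F23 β c d e = Coalgebra.counit (R := k) c * β d e := by
  simp [F23, LinearMap.mk₂_apply, smul_eq_mul]

end OQCProof

namespace OQCProof

open Coalgebra

variable {k : Type*} [Field k]
variable {C : Type*} [AddCommGroup C] [Module k C] [Coalgebra k C]

lemma sum_swap23 {n m p : ℕ} (f : Fin n → Fin m → Fin p → k) :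
    ∑ i, ∑ j, ∑ l, f i j l = ∑ i, ∑ l, ∑ j, f i j l :=
  Finset.sum_congr rfl fun _ _ => Finset.sum_comm

lemma counit_pair_sum {p : ℕ} {e : C} {e1 e2 : Fin p → C}
    (he : Coalgebra.comul (R := k) e = ∑ l, e1 l ⊗ₜ[k] e2 l) :
    ∑ l, Coalgebra.counit (R := k) (e1 l) * Coalgebra.counit (R := k) (e2 l)
      = Coalgebra.counit (R := k) e := by
  simpa [smul_eq_mul] using
    sum_counit_apply_left (V := k) (Coalgebra.counit (R := k)) he

lemma conv_F12_F12 (β γ : C →ₗ[k] C →ₗ[k] k) :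
    conv dmul (F12 β) (F12 γ) = F12 (conv (LinearMap.mul k k) β γ) := by
  ext c d e
  obtain ⟨n, c1, c2, hc⟩ := exists_fin_decomp (Coalgebra.comul (R := k) c)
  obtain ⟨p, d1, d2, hd⟩ := exists_fin_decomp (Coalgebra.comul (R := k) d)
  obtain ⟨q, e1, e2, he⟩ := exists_fin_decomp (Coalgebra.comul (R := k) e)
  have h0 := congrArg (fun F => F e) (conv_eq dmul (F12 β) (F12 γ) hc hd)
  simp only [LinearMap.sum_apply] at h0
  have h1 : ∀ i j, dmul (F12 β (c1 i) (d1 j)) (F12 γ (c2 i) (d2 j)) e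
      = β (c1 i) (d1 j) * γ (c2 i) (d2 j) * counit (R := k) e := by
    intro i j
    rw [dmul_eq _ _ he, ← counit_pair_sum he, Finset.mul_sum]
    exact Finset.sum_congr rfl fun l _ => by rw [F12_apply, F12_apply]; ring
  calc conv dmul (F12 β) (F12 γ) c d e
      = ∑ i, ∑ j, β (c1 i) (d1 j) * γ (c2 i) (d2 j) * counit (R := k) e := by
        rw [h0]; exact Finset.sum_congr rfl fun i _ => Finset.sum_congr rfl fun j _ => h1 i j
    _ = (∑ i, ∑ j, β (c1 i) (d1 j) * γ (c2 i) (d2 j)) * counit (R := k) e := by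
        simp [Finset.sum_mul]
    _ = F12 (conv (LinearMap.mul k k) β γ) c d e := by
        rw [F12_apply, conv_eq (LinearMap.mul k k) β γ hc hd]
        simp [LinearMap.mul_apply']

lemma conv_F13_F13 (β γ : C →ₗ[k] C →ₗ[k] k) :
    conv dmul (F13 β) (F13 γ) = F13 (conv (LinearMap.mul k k) β γ) := by
  ext c d e
  obtain ⟨n, c1, c2, hc⟩ := exists_fin_decomp (Coalgebra.comul (R := k) c)
  obtain ⟨p, d1, d2, hd⟩ := exists_fin_decomp (Coalgebra.comul (R := k) d)
  obtain ⟨q, e1, e2, he⟩ := exists_fin_decomp (Coalgebra.comul (R := k) e)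
  have h0 := congrArg (fun F => F e) (conv_eq dmul (F13 β) (F13 γ) hc hd)
  simp only [LinearMap.sum_apply] at h0
  have h1 : ∀ i j, dmul (F13 β (c1 i) (d1 j)) (F13 γ (c2 i) (d2 j)) e
      = (∑ l, β (c1 i) (e1 l) * γ (c2 i) (e2 l)) *
          (counit (R := k) (d1 j) * counit (R := k) (d2 j)) := by
    intro i j
    rw [dmul_eq _ _ he, Finset.sum_mul]
    exact Finset.sum_congr rfl fun l _ => by rw [F13_apply, F13_apply]; ring
  calc conv dmul (F13 β) (F13 γ) c d e
      = ∑ i, (∑ l, β (c1 i) (e1 l) * γ (c2 i) (e2 l)) *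
          (∑ j, counit (R := k) (d1 j) * counit (R := k) (d2 j)) := by
        rw [h0]
        exact Finset.sum_congr rfl fun i _ => by
          rw [Finset.mul_sum]; exact Finset.sum_congr rfl fun j _ => h1 i j
    _ = (∑ i, ∑ l, β (c1 i) (e1 l) * γ (c2 i) (e2 l)) * counit (R := k) d := by
        rw [counit_pair_sum hd, Finset.sum_mul]
    _ = F13 (conv (LinearMap.mul k k) β γ) c d e := by
        rw [F13_apply, conv_eq (LinearMap.mul k k) β γ hc he]
        simp [LinearMap.mul_apply']

lemma conv_F23_F23 (β γ : C →ₗ[k] C →ₗ[k] k) :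
    conv dmul (F23 β) (F23 γ) = F23 (conv (LinearMap.mul k k) β γ) := by
  ext c d e
  obtain ⟨n, c1, c2, hc⟩ := exists_fin_decomp (Coalgebra.comul (R := k) c)
  obtain ⟨p, d1, d2, hd⟩ := exists_fin_decomp (Coalgebra.comul (R := k) d)
  obtain ⟨q, e1, e2, he⟩ := exists_fin_decomp (Coalgebra.comul (R := k) e)
  have h0 := congrArg (fun F => F e) (conv_eq dmul (F23 β) (F23 γ) hc hd)
  simp only [LinearMap.sum_apply] at h0
  have h1 : ∀ i j, dmul (F23 β (c1 i) (d1 j)) (F23 γ (c2 i) (d2 j)) e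
      = (counit (R := k) (c1 i) * counit (R := k) (c2 i)) *
          (∑ l, β (d1 j) (e1 l) * γ (d2 j) (e2 l)) := by
    intro i j
    rw [dmul_eq _ _ he, Finset.mul_sum]
    exact Finset.sum_congr rfl fun l _ => by rw [F23_apply, F23_apply]; ring
  calc conv dmul (F23 β) (F23 γ) c d e
      = ∑ i, (counit (R := k) (c1 i) * counit (R := k) (c2 i)) *
          (∑ j, ∑ l, β (d1 j) (e1 l) * γ (d2 j) (e2 l)) := by
        rw [h0]
        exact Finset.sum_congr rfl fun i _ => by
          rw [Finset.mul_sum]; exact Finset.sum_congr rfl fun j _ => h1 i j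
    _ = counit (R := k) c * (∑ j, ∑ l, β (d1 j) (e1 l) * γ (d2 j) (e2 l)) := by
        rw [← Finset.sum_mul, counit_pair_sum hc]
    _ = F23 (conv (LinearMap.mul k k) β γ) c d e := by
        rw [F23_apply, conv_eq (LinearMap.mul k k) β γ hd he]
        simp [LinearMap.mul_apply']

end OQCProof

namespace OQCProof

open Coalgebra

variable {k : Type*} [Field k]
variable {C : Type*} [AddCommGroup C] [Module k C] [Coalgebra k C]

/-- `dmul (F12 β c d) G e = β c d * G e`. -/
lemma dmul_F12_left (β : C →ₗ[k] C →ₗ[k] k) (c d : C) (G : Module.Dual k C) (e : C) :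
    dmul (F12 β c d) G e = β c d * G e := by
  obtain ⟨q, e1, e2, he⟩ := exists_fin_decomp (Coalgebra.comul (R := k) e)
  rw [dmul_eq _ _ he]
  have : ∀ l, F12 β c d (e1 l) * G (e2 l)
      = β c d * (counit (R := k) (e1 l) • G (e2 l)) := by
    intro l; rw [F12_apply]; simp [smul_eq_mul]; ring
  simp_rw [this, ← Finset.mul_sum]
  rw [sum_counit_apply_left (V := k) G he]

/-- Formula for `conv dmul (F13 β) (F23 β)` with a fixed decomposition of `e`. -/
lemma conv_F13_F23_apply (β : C →ₗ[k] C →ₗ[k] k) {e : C} {q : ℕ} {e1 e2 : Fin q → C}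
    (he : Coalgebra.comul (R := k) e = ∑ l, e1 l ⊗ₜ[k] e2 l) (c d : C) :
    conv dmul (F13 β) (F23 β) c d e = ∑ l, β c (e1 l) * β d (e2 l) := by
  obtain ⟨n, c1, c2, hc⟩ := exists_fin_decomp (Coalgebra.comul (R := k) c)
  obtain ⟨p, d1, d2, hd⟩ := exists_fin_decomp (Coalgebra.comul (R := k) d)
  have h0 := congrArg (fun F => F e) (conv_eq dmul (F13 β) (F23 β) hc hd)
  simp only [LinearMap.sum_apply] at h0
  rw [h0]
  have h1 : ∀ i j, dmul (F13 β (c1 i) (d1 j)) (F23 β (c2 i) (d2 j)) e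
      = ∑ l, (counit (R := k) (c2 i) • β (c1 i) (e1 l)) *
          (counit (R := k) (d1 j) • β (d2 j) (e2 l)) := by
    intro i j
    rw [dmul_eq _ _ he]
    exact Finset.sum_congr rfl fun l _ => by
      rw [F13_apply, F23_apply]; simp [smul_eq_mul]; ring
  simp_rw [h1]
  rw [sum_swap23, Finset.sum_comm]
  refine Finset.sum_congr rfl fun l _ => ?_
  have h2 : ∀ i, ∑ j, (counit (R := k) (c2 i) • β (c1 i) (e1 l)) *
      (counit (R := k) (d1 j) • β (d2 j) (e2 l))
      = (counit (R := k) (c2 i) • β (c1 i) (e1 l)) * β d (e2 l) := by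
    intro i
    rw [← Finset.mul_sum]
    congr 1
    have h3 := sum_counit_apply_left (β.flip (e2 l)) hd
    simpa using h3
  simp_rw [h2]
  rw [← Finset.sum_mul]
  congr 1
  have h4 := sum_counit_apply_right (β.flip (e1 l)) hc
  simpa using h4

/-- Formula for `conv dmul (F13 β) (F12 β)` with a fixed decomposition of `c`. -/
lemma conv_F13_F12_apply (β : C →ₗ[k] C →ₗ[k] k) {c : C} {n : ℕ} {c1 c2 : Fin n → C}
    (hc : Coalgebra.comul (R := k) c = ∑ i, c1 i ⊗ₜ[k] c2 i) (d e : C) :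
    conv dmul (F13 β) (F12 β) c d e = ∑ i, β (c1 i) e * β (c2 i) d := by
  obtain ⟨p, d1, d2, hd⟩ := exists_fin_decomp (Coalgebra.comul (R := k) d)
  have h0 := congrArg (fun F => F e) (conv_eq dmul (F13 β) (F12 β) hc hd)
  simp only [LinearMap.sum_apply] at h0
  rw [h0]
  refine Finset.sum_congr rfl fun i _ => ?_
  have h1 : ∀ j, dmul (F13 β (c1 i) (d1 j)) (F12 β (c2 i) (d2 j)) e
      = (counit (R := k) (d1 j) • β (c2 i) (d2 j)) * β (c1 i) e := by
    intro j
    rw [show F13 β (c1 i) (d1 j) = counit (R := k) (d1 j) • β (c1 i) from rfl,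
      show F12 β (c2 i) (d2 j) = β (c2 i) (d2 j) • Coalgebra.counit (R := k) from rfl,
      LinearMap.map_smul₂, map_smul]
    simp only [LinearMap.smul_apply, dmul_counit_right, smul_eq_mul]
    ring
  simp_rw [h1, ← Finset.sum_mul]
  rw [sum_counit_apply_left (β (c2 i)) hd]
  ring

end OQCProof

namespace OQCProof

open Coalgebra

variable {k : Type*} [Field k]
variable {C : Type*} [AddCommGroup C] [Module k C] [Coalgebra k C]

lemma conv_F23_left (β : C →ₗ[k] C →ₗ[k] k) (Ψ : C →ₗ[k] C →ₗ[k] Module.Dual k C)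
    {d : C} {p : ℕ} {d1 d2 : Fin p → C}
    (hd : Coalgebra.comul (R := k) d = ∑ j, d1 j ⊗ₜ[k] d2 j) (c : C) :
    conv dmul (F23 β) Ψ c d = ∑ j, dmul (β (d1 j)) (Ψ c (d2 j)) := by
  obtain ⟨n, c1, c2, hc⟩ := exists_fin_decomp (Coalgebra.comul (R := k) c)
  rw [conv_eq dmul (F23 β) Ψ hc hd]
  have h1 : ∀ i j, dmul (F23 β (c1 i) (d1 j)) (Ψ (c2 i) (d2 j))
      = counit (R := k) (c1 i) •
          ((dmul (β (d1 j)) ∘ₗ Ψ.flip (d2 j)) (c2 i)) := by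
    intro i j
    rw [show F23 β (c1 i) (d1 j) = counit (R := k) (c1 i) • β (d1 j) from rfl,
      LinearMap.map_smul₂]
    rfl
  simp_rw [h1]
  rw [Finset.sum_comm]
  refine Finset.sum_congr rfl fun j _ => ?_
  have h2 := sum_counit_apply_left (dmul (β (d1 j)) ∘ₗ Ψ.flip (d2 j)) hc
  rw [h2]
  rfl

lemma expand_left (β : C →ₗ[k] C →ₗ[k] k) {c d e : C} {n p q : ℕ}
    {c1 c2 : Fin n → C} {d1 d2 : Fin p → C} {e1 e2 : Fin q → C}
    (hc : Coalgebra.comul (R := k) c = ∑ i, c1 i ⊗ₜ[k] c2 i)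
    (hd : Coalgebra.comul (R := k) d = ∑ j, d1 j ⊗ₜ[k] d2 j)
    (he : Coalgebra.comul (R := k) e = ∑ l, e1 l ⊗ₜ[k] e2 l) :
    conv dmul (F12 β) (conv dmul (F13 β) (F23 β)) c d e
      = ∑ i, ∑ j, ∑ l, β (c1 i) (d1 j) * β (c2 i) (e1 l) * β (d2 j) (e2 l) := by
  have h0 := congrArg (fun F => F e)
    (conv_eq dmul (F12 β) (conv dmul (F13 β) (F23 β)) hc hd)
  simp only [LinearMap.sum_apply] at h0
  rw [h0]
  refine Finset.sum_congr rfl fun i _ => Finset.sum_congr rfl fun j _ => ?_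
  rw [dmul_F12_left, conv_F13_F23_apply β he, Finset.mul_sum]
  exact Finset.sum_congr rfl fun l _ => by ring

lemma expand_right (β : C →ₗ[k] C →ₗ[k] k) {c d e : C} {n p q : ℕ}
    {c1 c2 : Fin n → C} {d1 d2 : Fin p → C} {e1 e2 : Fin q → C}
    (hc : Coalgebra.comul (R := k) c = ∑ i, c1 i ⊗ₜ[k] c2 i)
    (hd : Coalgebra.comul (R := k) d = ∑ j, d1 j ⊗ₜ[k] d2 j)
    (he : Coalgebra.comul (R := k) e = ∑ l, e1 l ⊗ₜ[k] e2 l) :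
    conv dmul (F23 β) (conv dmul (F13 β) (F12 β)) c d e
      = ∑ i, ∑ j, ∑ l, β (c2 i) (d2 j) * β (c1 i) (e2 l) * β (d1 j) (e1 l) := by
  have h0 := congrArg (fun F => F e)
    (conv_F23_left β (conv dmul (F13 β) (F12 β)) hd c)
  simp only [LinearMap.sum_apply] at h0
  rw [h0]
  have h1 : ∀ j, dmul (β (d1 j)) (conv dmul (F13 β) (F12 β) c (d2 j)) e
      = ∑ l, β (d1 j) (e1 l) * ∑ i, β (c1 i) (e2 l) * β (c2 i) (d2 j) := by
    intro j
    rw [dmul_eq _ _ he]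
    exact Finset.sum_congr rfl fun l _ => by
      rw [conv_F13_F12_apply β hc]
  simp_rw [h1]
  rw [show (∑ i, ∑ j, ∑ l, β (c2 i) (d2 j) * β (c1 i) (e2 l) * β (d1 j) (e1 l))
      = ∑ j, ∑ l, ∑ i, β (c2 i) (d2 j) * β (c1 i) (e2 l) * β (d1 j) (e1 l) from by
    rw [Finset.sum_comm]
    exact Finset.sum_congr rfl fun j _ => Finset.sum_comm]
  refine Finset.sum_congr rfl fun j _ => Finset.sum_congr rfl fun l _ => ?_
  rw [Finset.mul_sum]
  exact Finset.sum_congr rfl fun i _ => by ring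

end OQCProof

namespace OQCProof

open Coalgebra

section Aux

variable {k : Type*} [Field k]
variable {C : Type*} [AddCommGroup C] [Module k C] [Coalgebra k C]

lemma inverse_form_conv {b binv : C →ₗ[k] C →ₗ[k] k}
    (h1 : IsInverseForm (Coalgebra.comul (R := k)) (Coalgebra.counit (R := k))
      (Coalgebra.comul (R := k)) (Coalgebra.counit (R := k)) b binv) :
    conv (LinearMap.mul k k) binv b = Eform 1 ∧
      conv (LinearMap.mul k k) b binv = Eform 1 := by
  constructor <;>
  · ext c d
    obtain ⟨n, c1, c2, hc⟩ := exists_fin_decomp (Coalgebra.comul (R := k) c)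
    obtain ⟨p, d1, d2, hd⟩ := exists_fin_decomp (Coalgebra.comul (R := k) d)
    rw [conv_eq _ _ _ hc hd]
    simp only [LinearMap.mul_apply', Eform_apply, smul_eq_mul, mul_one]
    first
    | exact (h1 c d n p c1 c2 d1 d2 hc hd).1
    | exact (h1 c d n p c1 c2 d1 d2 hc hd).2

lemma binv_invariant (b binv : C →ₗ[k] C →ₗ[k] k) (T : C →ₗ[k] C)
    (h1 : IsInverseForm (Coalgebra.comul (R := k)) (Coalgebra.counit (R := k))
      (Coalgebra.comul (R := k)) (Coalgebra.counit (R := k)) b binv)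
    (hT : IsCoalgAutoWrt (Coalgebra.comul (R := k)) (Coalgebra.counit (R := k))
      {b, binv} T)
    (hbT : ∀ x y, b (T x) (T y) = b x y) :
    ∀ x y, binv (T x) (T y) = binv x y := by
  have hmb : b ∈ ({b, binv} : Set (C →ₗ[k] C →ₗ[k] k)) := Set.mem_insert _ _
  have hmv : binv ∈ ({b, binv} : Set (C →ₗ[k] C →ₗ[k] k)) := Set.mem_insert_of_mem _ rfl
  obtain ⟨hbinv_b, hb_binv⟩ := inverse_form_conv h1
  have key : conv (LinearMap.mul k k) (binv.compl₁₂ T T) b = Eform 1 := by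
    have hbTT : b.compl₁₂ T T = b := by
      ext x y; simpa [LinearMap.compl₁₂_apply] using hbT x y
    rw [← hbTT]
    ext c d
    obtain ⟨n, c1, c2, hc⟩ := exists_fin_decomp (Coalgebra.comul (R := k) c)
    obtain ⟨p, d1, d2, hd⟩ := exists_fin_decomp (Coalgebra.comul (R := k) d)
    obtain ⟨nf, f1, f2, hf⟩ := exists_fin_decomp (Coalgebra.comul (R := k) (T c))
    obtain ⟨ng, g1, g2, hg⟩ := exists_fin_decomp (Coalgebra.comul (R := k) (T d))
    rw [conv_eq _ _ _ hc hd]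
    simp only [LinearMap.compl₁₂_apply, LinearMap.mul_apply']
    calc ∑ i, ∑ j, binv (T (c1 i)) (T (d1 j)) * b (T (c2 i)) (T (d2 j))
        = ∑ j, ∑ i, binv (T (c1 i)) (T (d1 j)) * b (T (c2 i)) (T (d2 j)) :=
          Finset.sum_comm
      _ = ∑ j, ∑ l, binv (f1 l) (T (d1 j)) * b (f2 l) (T (d2 j)) :=
          Finset.sum_congr rfl fun j _ =>
            (hT.2.2 binv hmv b hmb c (T (d1 j)) (T (d2 j)) n nf c1 c2 f1 f2 hc hf).1
      _ = ∑ l, ∑ j, binv (f1 l) (T (d1 j)) * b (f2 l) (T (d2 j)) := Finset.sum_comm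
      _ = ∑ l, ∑ m, binv (f1 l) (g1 m) * b (f2 l) (g2 m) :=
          Finset.sum_congr rfl fun l _ =>
            (hT.2.2 binv hmv b hmb d (f1 l) (f2 l) p ng d1 d2 g1 g2 hd hg).2
      _ = Coalgebra.counit (R := k) (T c) * Coalgebra.counit (R := k) (T d) :=
          (h1 (T c) (T d) nf ng f1 f2 g1 g2 hf hg).1
      _ = Eform 1 c d := by rw [hT.2.1, hT.2.1]; simp
  have hfin : binv.compl₁₂ T T = binv :=
    conv_inv_unique (LinearMap.mul k k) 1 (fun x y z => mul_assoc x y z)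
      (fun x => one_mul x) (fun x => mul_one x) key hb_binv
  intro x y
  have := DFunLike.congr_fun (DFunLike.congr_fun hfin x) y
  simpa [LinearMap.compl₁₂_apply] using this

lemma autowrt_inverse (b binv : C →ₗ[k] C →ₗ[k] k) (T T' : C →ₗ[k] C)
    (hT : IsCoalgAutoWrt (Coalgebra.comul (R := k)) (Coalgebra.counit (R := k))
      {b, binv} T)
    (hbT : ∀ x y, b (T x) (T y) = b x y)
    (hvT : ∀ x y, binv (T x) (T y) = binv x y)
    (hT1 : ∀ x, T (T' x) = x) (hT2 : ∀ x, T' (T x) = x) :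
    IsCoalgAutoWrt (Coalgebra.comul (R := k)) (Coalgebra.counit (R := k))
      {binv, b} T' := by
  refine ⟨Function.bijective_iff_has_inverse.mpr ⟨T, hT1, hT2⟩, ?_, ?_⟩
  · intro c
    have := hT.2.1 (T' c)
    rw [hT1] at this
    exact this.symm
  · intro β hβ β' hβ' c d e n m c1 c2 f1 f2 hc hf
    have hββ : ∀ x y, β (T x) (T y) = β x y := by
      rcases hβ with rfl | hβ
      · exact hvT
      · rw [Set.mem_singleton_iff] at hβ; subst hβ; exact hbT
    have hβ'β' : ∀ x y, β' (T x) (T y) = β' x y := by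
      rcases hβ' with rfl | hβ'
      · exact hvT
      · rw [Set.mem_singleton_iff] at hβ'; subst hβ'; exact hbT
    have hβ₂ : β ∈ ({b, binv} : Set (C →ₗ[k] C →ₗ[k] k)) := by
      rw [Set.pair_comm b binv]; exact hβ
    have hβ'₂ : β' ∈ ({b, binv} : Set (C →ₗ[k] C →ₗ[k] k)) := by
      rw [Set.pair_comm b binv]; exact hβ'
    have hcc : Coalgebra.comul (R := k) (T (T' c)) = ∑ i, c1 i ⊗ₜ[k] c2 i := by
      rw [hT1]; exact hc
    have hmove : ∀ (γ : C →ₗ[k] C →ₗ[k] k), (∀ x y, γ (T x) (T y) = γ x y) →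
        ∀ x y, γ (T' x) y = γ x (T y) := by
      intro γ hγ x y
      have := hγ (T' x) y
      rw [hT1] at this
      exact this.symm
    have hmove' : ∀ (γ : C →ₗ[k] C →ₗ[k] k), (∀ x y, γ (T x) (T y) = γ x y) →
        ∀ x y, γ x (T' y) = γ (T x) y := by
      intro γ hγ x y
      have := hγ x (T' y)
      rw [hT1] at this
      exact this.symm
    constructor
    · have h' := (hT.2.2 β hβ₂ β' hβ'₂ (T' c) (T d) (T e) m n f1 f2 c1 c2 hf hcc).1
      calc ∑ i, β (T' (c1 i)) d * β' (T' (c2 i)) e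
          = ∑ i, β (c1 i) (T d) * β' (c2 i) (T e) :=
            Finset.sum_congr rfl fun i _ => by
              rw [hmove β hββ, hmove β' hβ'β']
        _ = ∑ j, β (T (f1 j)) (T d) * β' (T (f2 j)) (T e) := h'.symm
        _ = ∑ j, β (f1 j) d * β' (f2 j) e :=
            Finset.sum_congr rfl fun j _ => by rw [hββ, hβ'β']
    · have h' := (hT.2.2 β hβ₂ β' hβ'₂ (T' c) (T d) (T e) m n f1 f2 c1 c2 hf hcc).2
      calc ∑ i, β d (T' (c1 i)) * β' e (T' (c2 i))
          = ∑ i, β (T d) (c1 i) * β' (T e) (c2 i) :=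
            Finset.sum_congr rfl fun i _ => by
              rw [hmove' β hββ, hmove' β' hβ'β']
        _ = ∑ j, β (T d) (T (f1 j)) * β' (T e) (T (f2 j)) := h'.symm
        _ = ∑ j, β d (f1 j) * β' e (f2 j) :=
            Finset.sum_congr rfl fun j _ => by rw [hββ, hβ'β']

lemma qc1_inverse (b binv : C →ₗ[k] C →ₗ[k] k) (Td Tu Td' Tu' : C →ₗ[k] C)
    (h5 : QC1 (Coalgebra.comul (R := k)) (Coalgebra.counit (R := k)) b binv Td Tu)
    (hTd : IsCoalgAutoWrt (Coalgebra.comul (R := k)) (Coalgebra.counit (R := k))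
      {b, binv} Td)
    (hTu : IsCoalgAutoWrt (Coalgebra.comul (R := k)) (Coalgebra.counit (R := k))
      {b, binv} Tu)
    (hbd : ∀ x y, b (Td x) (Td y) = b x y) (hbu : ∀ x y, b (Tu x) (Tu y) = b x y)
    (hvd : ∀ x y, binv (Td x) (Td y) = binv x y)
    (hvu : ∀ x y, binv (Tu x) (Tu y) = binv x y)
    (hTd1 : ∀ x, Td (Td' x) = x) (hTu1 : ∀ x, Tu (Tu' x) = x) :
    QC1 (Coalgebra.comul (R := k)) (Coalgebra.counit (R := k)) binv b Td' Tu' := by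
  have hmb : b ∈ ({b, binv} : Set (C →ₗ[k] C →ₗ[k] k)) := Set.mem_insert _ _
  have hmv : binv ∈ ({b, binv} : Set (C →ₗ[k] C →ₗ[k] k)) :=
    Set.mem_insert_of_mem _ rfl
  have mv1 : ∀ x y, binv x (Tu' y) = binv (Tu x) y := by
    intro x y; have := hvu x (Tu' y); rw [hTu1] at this; exact this.symm
  have mb1 : ∀ x y, b (Td' x) y = b x (Td y) := by
    intro x y; have := hbd (Td' x) y; rw [hTd1] at this; exact this.symm
  have mb2 : ∀ x y, b x (Tu (Td y)) = b (Tu' x) (Td y) := by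
    intro x y; have := hbu (Tu' x) (Td y); rw [hTu1] at this; exact this
  have mb4 : ∀ x y, b (Tu' x) y = b x (Tu y) := by
    intro x y; have := hbu (Tu' x) y; rw [hTu1] at this; exact this.symm
  intro c d n p c1 c2 d1 d2 hc hd
  obtain ⟨nf, f1, f2, hf⟩ := exists_fin_decomp (Coalgebra.comul (R := k) (Tu c))
  obtain ⟨ng, g1, g2, hg⟩ := exists_fin_decomp (Coalgebra.comul (R := k) (Td d))
  constructor
  · calc ∑ i, ∑ j, binv (c1 i) (Tu' (d2 j)) * b (Td' (c2 i)) (d1 j)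
        = ∑ i, ∑ j, binv (Tu (c1 i)) (d2 j) * b (Tu (c2 i)) (Tu (Td (d1 j))) :=
          Finset.sum_congr rfl fun i _ => Finset.sum_congr rfl fun j _ => by
            rw [mv1 (c1 i) (d2 j), mb1 (c2 i) (d1 j), ← hbu (c2 i) (Td (d1 j))]
      _ = ∑ j, ∑ i, binv (Tu (c1 i)) (d2 j) * b (Tu (c2 i)) (Tu (Td (d1 j))) :=
          Finset.sum_comm
      _ = ∑ j, ∑ l, binv (f1 l) (d2 j) * b (f2 l) (Tu (Td (d1 j))) :=
          Finset.sum_congr rfl fun j _ =>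
            (hTu.2.2 binv hmv b hmb c (d2 j) (Tu (Td (d1 j))) n nf c1 c2 f1 f2 hc hf).1
      _ = ∑ l, ∑ j, b (Tu' (f2 l)) (Td (d1 j)) * binv (Td (f1 l)) (Td (d2 j)) := by
          rw [Finset.sum_comm]
          exact Finset.sum_congr rfl fun l _ => Finset.sum_congr rfl fun j _ => by
            rw [← hvd (f1 l) (d2 j), mb2 (f2 l) (d1 j)]; ring
      _ = ∑ l, ∑ m, b (Tu' (f2 l)) (g1 m) * binv (Td (f1 l)) (g2 m) :=
          Finset.sum_congr rfl fun l _ =>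
            (hTd.2.2 b hmb binv hmv d (Tu' (f2 l)) (Td (f1 l)) p ng d1 d2 g1 g2 hd hg).2
      _ = ∑ l, ∑ m, binv (Td (f1 l)) (g2 m) * b (f2 l) (Tu (g1 m)) :=
          Finset.sum_congr rfl fun l _ => Finset.sum_congr rfl fun m _ => by
            rw [mb4 (f2 l) (g1 m)]; ring
      _ = Coalgebra.counit (R := k) (Tu c) * Coalgebra.counit (R := k) (Td d) :=
          (h5 (Tu c) (Td d) nf ng f1 f2 g1 g2 hf hg).2
      _ = Coalgebra.counit (R := k) c * Coalgebra.counit (R := k) d := by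
          rw [hTu.2.1, hTd.2.1]
  · calc ∑ i, ∑ j, b (Td' (c1 i)) (d2 j) * binv (c2 i) (Tu' (d1 j))
        = ∑ i, ∑ j, b (Tu (c1 i)) (Tu (Td (d2 j))) * binv (Tu (c2 i)) (d1 j) :=
          Finset.sum_congr rfl fun i _ => Finset.sum_congr rfl fun j _ => by
            rw [mb1 (c1 i) (d2 j), ← hbu (c1 i) (Td (d2 j)), mv1 (c2 i) (d1 j)]
      _ = ∑ j, ∑ i, b (Tu (c1 i)) (Tu (Td (d2 j))) * binv (Tu (c2 i)) (d1 j) :=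
          Finset.sum_comm
      _ = ∑ j, ∑ l, b (f1 l) (Tu (Td (d2 j))) * binv (f2 l) (d1 j) :=
          Finset.sum_congr rfl fun j _ =>
            (hTu.2.2 b hmb binv hmv c (Tu (Td (d2 j))) (d1 j) n nf c1 c2 f1 f2 hc hf).1
      _ = ∑ l, ∑ j, binv (Td (f2 l)) (Td (d1 j)) * b (Tu' (f1 l)) (Td (d2 j)) := by
          rw [Finset.sum_comm]
          exact Finset.sum_congr rfl fun l _ => Finset.sum_congr rfl fun j _ => by
            rw [mb2 (f1 l) (d2 j), ← hvd (f2 l) (d1 j)]; ring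
      _ = ∑ l, ∑ m, binv (Td (f2 l)) (g1 m) * b (Tu' (f1 l)) (g2 m) :=
          Finset.sum_congr rfl fun l _ =>
            (hTd.2.2 binv hmv b hmb d (Td (f2 l)) (Tu' (f1 l)) p ng d1 d2 g1 g2 hd hg).2
      _ = ∑ l, ∑ m, b (f1 l) (Tu (g2 m)) * binv (Td (f2 l)) (g1 m) :=
          Finset.sum_congr rfl fun l _ => Finset.sum_congr rfl fun m _ => by
            rw [mb4 (f1 l) (g2 m)]; ring
      _ = Coalgebra.counit (R := k) (Tu c) * Coalgebra.counit (R := k) (Td d) :=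
          (h5 (Tu c) (Td d) nf ng f1 f2 g1 g2 hf hg).1
      _ = Coalgebra.counit (R := k) c * Coalgebra.counit (R := k) d := by
          rw [hTu.2.1, hTd.2.1]

set_option maxHeartbeats 1000000 in
lemma qc3_inverse (b binv : C →ₗ[k] C →ₗ[k] k)
    (h1 : IsInverseForm (Coalgebra.comul (R := k)) (Coalgebra.counit (R := k))
      (Coalgebra.comul (R := k)) (Coalgebra.counit (R := k)) b binv)
    (h7 : QC3 (Coalgebra.comul (R := k)) b) :
    QC3 (Coalgebra.comul (R := k)) binv := by
  obtain ⟨hbinv_b, hb_binv⟩ := inverse_form_conv h1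
  have hE12 : F12 (Eform (1 : k)) = Eform (C := C) (Coalgebra.counit (R := k)) := by
    ext c d e
    simp [smul_eq_mul]
  have hE13 : F13 (Eform (1 : k)) = Eform (C := C) (Coalgebra.counit (R := k)) := by
    ext c d e
    simp [smul_eq_mul]; ring
  have hE23 : F23 (Eform (1 : k)) = Eform (C := C) (Coalgebra.counit (R := k)) := by
    ext c d e
    simp [smul_eq_mul]; ring
  have hA : ∀ x y z : C →ₗ[k] C →ₗ[k] Module.Dual k C,
      conv dmul (conv dmul x y) z = conv dmul x (conv dmul y z) :=
    conv_assoc (A := Module.Dual k C) dmul (fun a b c => dmul_assoc a b c)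
  have hL : ∀ x : C →ₗ[k] C →ₗ[k] Module.Dual k C,
      conv dmul (Eform (Coalgebra.counit (R := k))) x = x :=
    conv_Eform_left (A := Module.Dual k C) dmul _ (fun F => dmul_counit_left F)
  have hR : ∀ x : C →ₗ[k] C →ₗ[k] Module.Dual k C,
      conv dmul x (Eform (Coalgebra.counit (R := k))) = x :=
    conv_Eform_right (A := Module.Dual k C) dmul _ (fun F => dmul_counit_right F)
  have cancel : ∀ a a' W : C →ₗ[k] C →ₗ[k] Module.Dual k C,
      conv dmul a a' = Eform (Coalgebra.counit (R := k)) →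
      conv dmul a (conv dmul a' W) = W := by
    intro a a' W h
    rw [← hA, h, hL]
  have u12 : conv dmul (F12 b) (F12 binv) = Eform (Coalgebra.counit (R := k)) := by
    rw [conv_F12_F12, hb_binv, hE12]
  have u12' : conv dmul (F12 binv) (F12 b) = Eform (Coalgebra.counit (R := k)) := by
    rw [conv_F12_F12, hbinv_b, hE12]
  have u13 : conv dmul (F13 b) (F13 binv) = Eform (Coalgebra.counit (R := k)) := by
    rw [conv_F13_F13, hb_binv, hE13]
  have u13' : conv dmul (F13 binv) (F13 b) = Eform (Coalgebra.counit (R := k)) := by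
    rw [conv_F13_F13, hbinv_b, hE13]
  have u23 : conv dmul (F23 b) (F23 binv) = Eform (Coalgebra.counit (R := k)) := by
    rw [conv_F23_F23, hb_binv, hE23]
  have u23' : conv dmul (F23 binv) (F23 b) = Eform (Coalgebra.counit (R := k)) := by
    rw [conv_F23_F23, hbinv_b, hE23]
  have hYB : conv dmul (F12 b) (conv dmul (F13 b) (F23 b))
      = conv dmul (F23 b) (conv dmul (F13 b) (F12 b)) := by
    ext c d e
    obtain ⟨n, c1, c2, hc⟩ := exists_fin_decomp (Coalgebra.comul (R := k) c)
    obtain ⟨p, d1, d2, hd⟩ := exists_fin_decomp (Coalgebra.comul (R := k) d)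
    obtain ⟨q, e1, e2, he⟩ := exists_fin_decomp (Coalgebra.comul (R := k) e)
    rw [expand_left b hc hd he, expand_right b hc hd he]
    exact h7 c d e n p q c1 c2 d1 d2 e1 e2 hc hd he
  have h1' : conv dmul (conv dmul (F12 b) (conv dmul (F13 b) (F23 b)))
      (conv dmul (F23 binv) (conv dmul (F13 binv) (F12 binv)))
      = Eform (Coalgebra.counit (R := k)) := by
    rw [hA, hA, cancel _ _ _ u23, cancel _ _ _ u13, u12]
  have h2' : conv dmul (conv dmul (F12 binv) (conv dmul (F13 binv) (F23 binv)))
      (conv dmul (F23 b) (conv dmul (F13 b) (F12 b)))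
      = Eform (Coalgebra.counit (R := k)) := by
    rw [hA, hA, cancel _ _ _ u23', cancel _ _ _ u13', u12']
  have hval : conv dmul (F12 binv) (conv dmul (F13 binv) (F23 binv))
      = conv dmul (F23 binv) (conv dmul (F13 binv) (F12 binv)) := by
    calc conv dmul (F12 binv) (conv dmul (F13 binv) (F23 binv))
        = conv dmul (conv dmul (F12 binv) (conv dmul (F13 binv) (F23 binv)))
            (Eform (Coalgebra.counit (R := k))) := (hR _).symm
      _ = conv dmul (conv dmul (F12 binv) (conv dmul (F13 binv) (F23 binv)))
            (conv dmul (conv dmul (F12 b) (conv dmul (F13 b) (F23 b)))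
              (conv dmul (F23 binv) (conv dmul (F13 binv) (F12 binv)))) := by rw [h1']
      _ = conv dmul (conv dmul (conv dmul (F12 binv) (conv dmul (F13 binv) (F23 binv)))
            (conv dmul (F12 b) (conv dmul (F13 b) (F23 b))))
            (conv dmul (F23 binv) (conv dmul (F13 binv) (F12 binv))) := (hA _ _ _).symm
      _ = conv dmul (conv dmul (conv dmul (F12 binv) (conv dmul (F13 binv) (F23 binv)))
            (conv dmul (F23 b) (conv dmul (F13 b) (F12 b))))
            (conv dmul (F23 binv) (conv dmul (F13 binv) (F12 binv))) := by rw [hYB]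
      _ = conv dmul (Eform (Coalgebra.counit (R := k)))
            (conv dmul (F23 binv) (conv dmul (F13 binv) (F12 binv))) := by rw [h2']
      _ = conv dmul (F23 binv) (conv dmul (F13 binv) (F12 binv)) := hL _
  intro c d e n p q c1 c2 d1 d2 e1 e2 hc hd he
  have hl := expand_left binv hc hd he
  have hr := expand_right binv hc hd he
  rw [← hl, ← hr, hval]


end Aux

end OQCProof
/-- If `(C, b, T_d, T_u)` is an oriented quantum coalgebra then so is
`(C, b⁻¹, T_d⁻¹, T_u⁻¹)`. -/
theorem oqc_inverse {k C : Type*} [Field k] [AddCommGroup C] [Module k C] [Coalgebra k C]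
    (b binv : C →ₗ[k] C →ₗ[k] k) (Td Tu Td' Tu' : C →ₗ[k] C)
    (h : IsOrientedQuantumCoalgebra (Coalgebra.comul (R := k)) (Coalgebra.counit (R := k))
      b binv Td Tu)
    (hTd1 : Td ∘ₗ Td' = LinearMap.id) (hTd2 : Td' ∘ₗ Td = LinearMap.id)
    (hTu1 : Tu ∘ₗ Tu' = LinearMap.id) (hTu2 : Tu' ∘ₗ Tu = LinearMap.id) :
    IsOrientedQuantumCoalgebra (Coalgebra.comul (R := k)) (Coalgebra.counit (R := k))
      binv b Td' Tu' := by
  obtain ⟨h1, h2, h3, h4, h5, h6, h7⟩ := h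
  have hTd1' : ∀ x, Td (Td' x) = x := fun x => by
    simpa using LinearMap.congr_fun hTd1 x
  have hTd2' : ∀ x, Td' (Td x) = x := fun x => by
    simpa using LinearMap.congr_fun hTd2 x
  have hTu1' : ∀ x, Tu (Tu' x) = x := fun x => by
    simpa using LinearMap.congr_fun hTu1 x
  have hTu2' : ∀ x, Tu' (Tu x) = x := fun x => by
    simpa using LinearMap.congr_fun hTu2 x
  have hbd : ∀ x y, b (Td x) (Td y) = b x y := fun x y => (h6 x y).1
  have hbu : ∀ x y, b (Tu x) (Tu y) = b x y := fun x y => (h6 x y).2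
  have hvd : ∀ x y, binv (Td x) (Td y) = binv x y :=
    OQCProof.binv_invariant b binv Td h1 h2 hbd
  have hvu : ∀ x y, binv (Tu x) (Tu y) = binv x y :=
    OQCProof.binv_invariant b binv Tu h1 h3 hbu
  refine ⟨?_, ?_, ?_, ?_, ?_, ?_, ?_⟩
  · exact fun c d n m c1 c2 d1 d2 hc hd =>
      ⟨(h1 c d n m c1 c2 d1 d2 hc hd).2, (h1 c d n m c1 c2 d1 d2 hc hd).1⟩
  · exact OQCProof.autowrt_inverse b binv Td Td' h2 hbd hvd hTd1' hTd2'
  · exact OQCProof.autowrt_inverse b binv Tu Tu' h3 hbu hvu hTu1' hTu2'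
  · have hc4 : ∀ z, Td (Tu z) = Tu (Td z) := fun z => by
      have := LinearMap.congr_fun h4 z
      simpa using this
    have key : ∀ z, Td' (Tu z) = Tu (Td' z) := by
      intro z
      have h0 : Td (Tu (Td' z)) = Tu z := by rw [hc4, hTd1']
      rw [← h0, hTd2']
    ext x
    simp only [LinearMap.comp_apply]
    have h0 : Tu' (Td' (Tu (Tu' x))) = Td' (Tu' x) := by rw [key, hTu2']
    rw [hTu1'] at h0
    exact h0.symm
  · exact OQCProof.qc1_inverse b binv Td Tu Td' Tu' h5 h2 h3 hbd hbu hvd hvu hTd1' hTu1'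
  · intro c d
    constructor
    · have := hvd (Td' c) (Td' d)
      rw [hTd1', hTd1'] at this
      exact this.symm
    · have := hvu (Tu' c) (Tu' d)
      rw [hTu1', hTu1'] at this
      exact this.symm
  · exact OQCProof.qc3_inverse b binv h1 h7
end

section
/- Let (C, b, T_d, T_u) be an oriented quantum coalgebra over a field k such that the bilinear form b is left non-singular (i.e., c ↦ b(c, −) is injective as a map C → C*) or right non-singular (i.e., c ↦ b(−, c) is injective). Then T_d and T_u are coalgebra automorphisms of C (in the ordinary sense: they commute with the coproduct and counit). -/
open TensorProduct

noncomputable section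
namespace OQCAux

variable {k : Type*} [Field k] {C : Type*} [AddCommGroup C] [Module k C]

/-- existence of finite Fin-indexed representation -/
theorem exists_fin_rep (t : C ⊗[k] C) :
    ∃ (n : ℕ) (x y : Fin n → C), t = ∑ i, x i ⊗ₜ[k] y i := by
  induction t with
  | zero => exact ⟨0, ![], ![], by simp⟩
  | tmul a b => exact ⟨1, ![a], ![b], by simp⟩
  | add u v hu hv =>
    obtain ⟨n, x, y, hxy⟩ := hu
    obtain ⟨m, x', y', hxy'⟩ := hv
    refine ⟨n + m, Fin.append x x', Fin.append y y', ?_⟩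
    rw [Fin.sum_univ_add, hxy, hxy']
    simp [Fin.append_left, Fin.append_right]

/-- The pairing map: `pairE β (x ⊗ y) d e = β x d * β y e`. -/
def pairE (β : C →ₗ[k] C →ₗ[k] k) : C ⊗[k] C →ₗ[k] C →ₗ[k] C →ₗ[k] k :=
  TensorProduct.lift (LinearMap.mk₂ k (fun x y => (β x).smulRight (β y))
    (fun x x' y => by ext d e; simp [add_mul]
    )
    (fun r x y => by ext d e; simp [mul_assoc]
    )
    (fun x y y' => by ext d e; simp [mul_add]
    )
    (fun r x y => by ext d e; simp; ring))

@[simp] theorem pairE_tmul (β : C →ₗ[k] C →ₗ[k] k) (x y d e : C) :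
    pairE β (x ⊗ₜ[k] y) d e = β x d * β y e := by
  simp [pairE]

theorem pairE_inj (β : C →ₗ[k] C →ₗ[k] k) (hβ : Function.Injective ⇑β)
    (u : C ⊗[k] C) (hu : ∀ d e : C, pairE β u d e = 0) : u = 0 := by
  classical
  set B := Module.Basis.ofVectorSpace k C with hB
  set ℬ := B.tensorProduct B with hℬ
  set r := ℬ.repr u with hr
  have hli : LinearIndependent k (fun i : Module.Basis.ofVectorSpaceIndex k C => β (B i)) :=
    B.linearIndependent.map' β (LinearMap.ker_eq_bot.mpr hβ)
  suffices hrz : r = 0 by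
    have := ℬ.linearCombination_repr u
    rw [← hr, hrz] at this
    simpa using this.symm
  set S1 := r.support.image Prod.fst with hS1
  set S2 := r.support.image Prod.snd with hS2
  have hrep : u = ∑ p ∈ S1 ×ˢ S2, r p • (B p.1 ⊗ₜ[k] B p.2) := by
    have h1 : ∑ p ∈ r.support, r p • ℬ p = u := by
      conv_rhs => rw [← ℬ.linearCombination_repr u]
      rw [Finsupp.linearCombination_apply]
      rfl
    have h2 : ∑ p ∈ r.support, r p • ℬ p
        = ∑ p ∈ r.support, r p • (B p.1 ⊗ₜ[k] B p.2) :=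
      Finset.sum_congr rfl (fun p _ => by rw [hℬ, Module.Basis.tensorProduct_apply'])
    rw [← h1, h2]
    refine Finset.sum_subset ?_ ?_
    · intro p hp
      exact Finset.mem_product.mpr ⟨Finset.mem_image_of_mem _ hp, Finset.mem_image_of_mem _ hp⟩
    · intro p _ hp
      rw [Finsupp.notMem_support_iff.mp hp, zero_smul]
  have hval : ∀ d e : C, ∑ i ∈ S1, (∑ j ∈ S2, r (i, j) * β (B j) e) * β (B i) d = 0 := by
    intro d e
    have := hu d e
    rw [hrep] at this
    simp only [map_sum, LinearMap.map_smul, LinearMap.sum_apply, LinearMap.smul_apply,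
      pairE_tmul, smul_eq_mul] at this
    rw [Finset.sum_product] at this
    rw [← this]
    rw [Finset.sum_congr rfl]
    intro i _
    rw [Finset.sum_mul]
    refine Finset.sum_congr rfl fun j _ => ?_
    ring
  have hcoef : ∀ (i : Module.Basis.ofVectorSpaceIndex k C), i ∈ S1 → ∀ e : C,
      ∑ j ∈ S2, r (i, j) * β (B j) e = 0 := by
    intro i hi e
    refine linearIndependent_iff'.mp hli S1 (fun i => ∑ j ∈ S2, r (i, j) * β (B j) e) ?_ i hi
    ext d
    simpa using hval d e
  have hrij : ∀ i ∈ S1, ∀ j ∈ S2, r (i, j) = 0 := by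
    intro i hi j hj
    refine linearIndependent_iff'.mp hli S2 (fun j => r (i, j)) ?_ j hj
    ext e
    simpa using hcoef i hi e
  rw [← Finsupp.support_eq_empty, ← Finset.subset_empty]
  intro p hp
  exact absurd (hrij p.1 (Finset.mem_image_of_mem _ hp) p.2 (Finset.mem_image_of_mem _ hp))
    (by simpa using Finsupp.mem_support_iff.mp hp)

end OQCAux
end

noncomputable section
namespace OQCAux

variable {k : Type*} [Field k] {C : Type*} [AddCommGroup C] [Module k C]

theorem wrt_to_auto [Coalgebra k C]
    (b : C →ₗ[k] C →ₗ[k] k) (𝒮 : Set (C →ₗ[k] C →ₗ[k] k)) (hb𝒮 : b ∈ 𝒮) (T : C →ₗ[k] C)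
    (hT : IsCoalgAutoWrt (Coalgebra.comul (R := k)) (Coalgebra.counit (R := k)) 𝒮 T)
    (hns : Function.Injective ⇑b ∨ Function.Injective ⇑b.flip) :
    IsCoalgAuto (Coalgebra.comul (R := k)) (Coalgebra.counit (R := k)) T := by
  refine ⟨hT.1, hT.2.1, ?_⟩
  ext c
  simp only [LinearMap.comp_apply]
  obtain ⟨n, x, y, hxy⟩ := exists_fin_rep (Coalgebra.comul (R := k) c)
  obtain ⟨m, f, g, hfg⟩ := exists_fin_rep (Coalgebra.comul (R := k) (T c))
  have key := fun d e => hT.2.2 b hb𝒮 b hb𝒮 c d e n m x y f g hxy hfg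
  have hz : TensorProduct.map T T (Coalgebra.comul (R := k) c)
      = ∑ i, T (x i) ⊗ₜ[k] T (y i) := by
    rw [hxy]; simp
  have goal0 : Coalgebra.comul (R := k) (T c)
      - TensorProduct.map T T (Coalgebra.comul (R := k) c) = 0 := by
    rcases hns with hinj | hinj
    · refine pairE_inj b hinj _ fun d e => ?_
      simp only [map_sub, LinearMap.sub_apply, hz, hfg, map_sum, LinearMap.sum_apply, pairE_tmul]
      rw [(key d e).1]
      exact sub_self _
    · refine pairE_inj b.flip hinj _ fun d e => ?_
      simp only [map_sub, LinearMap.sub_apply, hz, hfg, map_sum, LinearMap.sum_apply, pairE_tmul,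
        LinearMap.flip_apply]
      rw [(key d e).2]
      exact sub_self _
  exact sub_eq_zero.mp goal0

end OQCAux
end

/-- If the form of an oriented quantum coalgebra is left or right non-singular, then
`T_d` and `T_u` are ordinary coalgebra automorphisms. -/
theorem oqc_nonsingular_strict {k C : Type*} [Field k] [AddCommGroup C] [Module k C]
    [Coalgebra k C] (b binv : C →ₗ[k] C →ₗ[k] k) (Td Tu : C →ₗ[k] C)
    (h : IsOrientedQuantumCoalgebra (Coalgebra.comul (R := k)) (Coalgebra.counit (R := k))
      b binv Td Tu)
    (hns : Function.Injective ⇑b ∨ Function.Injective ⇑b.flip) :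
    IsCoalgAuto (Coalgebra.comul (R := k)) (Coalgebra.counit (R := k)) Td ∧
    IsCoalgAuto (Coalgebra.comul (R := k)) (Coalgebra.counit (R := k)) Tu :=
  ⟨OQCAux.wrt_to_auto b _ (Set.mem_insert b {binv}) Td h.2.1 hns,
   OQCAux.wrt_to_auto b _ (Set.mem_insert b {binv}) Tu h.2.2.1 hns⟩
end

section
/- If (C, b, S) is a quantum coalgebra over a field k, then (C, b, 1_C, S^{-2}) is an oriented quantum coalgebra over k. In particular, if (C, b, S) is a strict quantum coalgebra then (C, b, 1_C, S^{-2}) is a strict oriented quantum coalgebra. -/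
open TensorProduct

section AuxQC

variable {k : Type*} [Field k] {C : Type*} [AddCommGroup C] [Module k C]

/-- Evaluation of a pair of functionals on a tensor. -/
noncomputable def PhiQC (φ ψ : C →ₗ[k] k) : C ⊗[k] C →ₗ[k] k :=
  TensorProduct.lift ((LinearMap.mul k k).compl₁₂ φ ψ)

lemma PhiQC_tmul (φ ψ : C →ₗ[k] k) (x y : C) :
    PhiQC φ ψ (x ⊗ₜ[k] y) = φ x * ψ y := by
  simp [PhiQC]

lemma existsFinQC (x : C ⊗[k] C) :
    ∃ (n : ℕ) (a b : Fin n → C), x = ∑ i, a i ⊗ₜ[k] b i := by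
  induction x with
  | zero => exact ⟨0, ![], ![], by simp⟩
  | tmul x y => exact ⟨1, ![x], ![y], by simp⟩
  | add x y hx hy =>
    obtain ⟨n, a, b, hx⟩ := hx
    obtain ⟨m, a', b', hy⟩ := hy
    refine ⟨n + m, Fin.append a a', Fin.append b b', ?_⟩
    rw [Fin.sum_univ_add]
    simp [hx, hy]

lemma sumPhiQC (φ ψ : C →ₗ[k] k) {n : ℕ} {c1 c2 : Fin n → C} {X : C ⊗[k] C}
    (h : X = ∑ i, c1 i ⊗ₜ[k] c2 i) :
    PhiQC φ ψ X = ∑ i, φ (c1 i) * ψ (c2 i) := by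
  subst h
  simp [PhiQC]

lemma commCommQC (X : C ⊗[k] C) :
    TensorProduct.comm k C C (TensorProduct.comm k C C X) = X := by
  induction X with
  | zero => simp
  | tmul x y => simp
  | add x y hx hy => simp [hx, hy]

lemma commMapQC (f g : C →ₗ[k] C) (X : C ⊗[k] C) :
    TensorProduct.comm k C C (TensorProduct.map f g X)
      = TensorProduct.map g f (TensorProduct.comm k C C X) := by
  induction X with
  | zero => simp
  | tmul x y => simp
  | add x y hx hy => simp [hx, hy]

end AuxQC

/-- If `(C, b, S)` is a quantum coalgebra then `(C, b, 1_C, S⁻²)` is an oriented quantum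
coalgebra; if moreover `(C, b, S)` is strict then `(C, b, 1_C, S⁻²)` is a strict oriented
quantum coalgebra. Here `Sinv` denotes the inverse of `S`, the inverse of `b` being
`b(S(·), ·)` by (QC.1). -/
theorem quantum_coalgebra_gives_oriented {k C : Type*} [Field k] [AddCommGroup C]
    [Module k C] [Coalgebra k C] (b : C →ₗ[k] C →ₗ[k] k) (S Sinv : C →ₗ[k] C)
    (h : IsQuantumCoalgebra (Coalgebra.comul (R := k)) (Coalgebra.counit (R := k)) b S)
    (hS1 : S ∘ₗ Sinv = LinearMap.id) (hS2 : Sinv ∘ₗ S = LinearMap.id) :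
    IsOrientedQuantumCoalgebra (Coalgebra.comul (R := k)) (Coalgebra.counit (R := k))
      b (b ∘ₗ S) LinearMap.id (Sinv ∘ₗ Sinv) ∧
    ((∀ c : C, (TensorProduct.comm k C C) (Coalgebra.comul (R := k) (S c))
        = TensorProduct.map S S (Coalgebra.comul (R := k) c)) →
      IsStrictOrientedQuantumCoalgebra (Coalgebra.comul (R := k)) (Coalgebra.counit (R := k))
        b (b ∘ₗ S) LinearMap.id (Sinv ∘ₗ Sinv)) := by
  obtain ⟨hSbij, hSeps, hSiso, hInv, hB2, hYB⟩ := h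
  have hSv : ∀ x : C, S (Sinv x) = x := fun x => by
    have := LinearMap.ext_iff.mp hS1 x; simpa using this
  have hvS : ∀ x : C, Sinv (S x) = x := fun x => by
    have := LinearMap.ext_iff.mp hS2 x; simpa using this
  have hSinvbij : Function.Bijective Sinv :=
    ⟨fun a b hab => by rw [← hSv a, hab, hSv], fun a => ⟨S a, hvS a⟩⟩
  have hTubij : Function.Bijective (Sinv ∘ₗ Sinv : C →ₗ[k] C) := by
    simpa [LinearMap.coe_comp] using hSinvbij.comp hSinvbij
  have hεv : ∀ x : C, Coalgebra.counit (R := k) (Sinv x) = Coalgebra.counit (R := k) x :=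
    fun x => by rw [← hSeps (Sinv x), hSv]
  have e1 : ∀ x y : C, b (S x) y = b x (Sinv y) := fun x y => by
    have := hB2 x (Sinv y); rwa [hSv] at this
  have e2 : ∀ x y : C, b (Sinv x) y = b x (S y) := fun x y => by
    have := hB2 (Sinv x) y; rw [hSv] at this; exact this.symm
  have e3 : ∀ x y : C, b x (Sinv y) = b (S x) y := fun x y => (e1 x y).symm
  have e4 : ∀ x y : C, b x (S y) = b (Sinv x) y := fun x y => (e2 x y).symm
  -- weak coalgebra (anti)morphism property of S, functional (Phi) form
  have hA1 : ∀ (x d e : C),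
      PhiQC (b.flip d) (b.flip e) (Coalgebra.comul (R := k) x)
        = PhiQC (b.flip (S e)) (b.flip (S d)) (Coalgebra.comul (R := k) (S x)) := by
    intro x d e
    obtain ⟨n, c1, c2, hc⟩ := existsFinQC (Coalgebra.comul (R := k) x)
    obtain ⟨m, f1, f2, hf⟩ := existsFinQC (Coalgebra.comul (R := k) (S x))
    rw [sumPhiQC _ _ hc, sumPhiQC _ _ hf]
    have h1 := (hSiso x (S d) (S e) n m c1 c2 f1 f2 hc hf).1
    calc ∑ i, b.flip d (c1 i) * b.flip e (c2 i)
        = ∑ i, b (S (c1 i)) (S d) * b (S (c2 i)) (S e) := by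
          simp only [LinearMap.flip_apply, hB2]
      _ = ∑ j, b (f2 j) (S d) * b (f1 j) (S e) := h1
      _ = ∑ j, b.flip (S e) (f1 j) * b.flip (S d) (f2 j) := by
          simp only [LinearMap.flip_apply]
          exact Finset.sum_congr rfl fun j _ => mul_comm _ _
  have hB1 : ∀ (x d e : C),
      PhiQC (b d) (b e) (Coalgebra.comul (R := k) x)
        = PhiQC (b (S e)) (b (S d)) (Coalgebra.comul (R := k) (S x)) := by
    intro x d e
    obtain ⟨n, c1, c2, hc⟩ := existsFinQC (Coalgebra.comul (R := k) x)
    obtain ⟨m, f1, f2, hf⟩ := existsFinQC (Coalgebra.comul (R := k) (S x))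
    rw [sumPhiQC _ _ hc, sumPhiQC _ _ hf]
    have h1 := (hSiso x (S d) (S e) n m c1 c2 f1 f2 hc hf).2
    calc ∑ i, b d (c1 i) * b e (c2 i)
        = ∑ i, b (S d) (S (c1 i)) * b (S e) (S (c2 i)) := by
          simp only [hB2]
      _ = ∑ j, b (S d) (f2 j) * b (S e) (f1 j) := h1
      _ = ∑ j, b (S e) (f1 j) * b (S d) (f2 j) :=
          Finset.sum_congr rfl fun j _ => mul_comm _ _
  have masterA : ∀ (c D E : C) (n m : ℕ) (c1 c2 : Fin n → C) (f1 f2 : Fin m → C),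
      Coalgebra.comul (R := k) c = ∑ i, c1 i ⊗ₜ[k] c2 i →
      Coalgebra.comul (R := k) (Sinv (Sinv c)) = ∑ j, f1 j ⊗ₜ[k] f2 j →
      ∑ i, b (c1 i) (S (S D)) * b (c2 i) (S (S E)) = ∑ j, b (f1 j) D * b (f2 j) E := by
    intro c D E n m c1 c2 f1 f2 hc hf
    have l1 : ∑ i, b (c1 i) (S (S D)) * b (c2 i) (S (S E))
        = PhiQC (b.flip (S (S D))) (b.flip (S (S E))) (Coalgebra.comul (R := k) c) := by
      rw [sumPhiQC _ _ hc]; simp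
    have l2 : ∑ j, b (f1 j) D * b (f2 j) E
        = PhiQC (b.flip D) (b.flip E) (Coalgebra.comul (R := k) (Sinv (Sinv c))) := by
      rw [sumPhiQC _ _ hf]; simp
    rw [l1, l2, hA1 (Sinv (Sinv c)) D E, hSv, hA1 (Sinv c) (S E) (S D), hSv]
  have masterB : ∀ (c D E : C) (n m : ℕ) (c1 c2 : Fin n → C) (f1 f2 : Fin m → C),
      Coalgebra.comul (R := k) c = ∑ i, c1 i ⊗ₜ[k] c2 i →
      Coalgebra.comul (R := k) (Sinv (Sinv c)) = ∑ j, f1 j ⊗ₜ[k] f2 j →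
      ∑ i, b (S (S D)) (c1 i) * b (S (S E)) (c2 i) = ∑ j, b D (f1 j) * b E (f2 j) := by
    intro c D E n m c1 c2 f1 f2 hc hf
    have l1 : ∑ i, b (S (S D)) (c1 i) * b (S (S E)) (c2 i)
        = PhiQC (b (S (S D))) (b (S (S E))) (Coalgebra.comul (R := k) c) := by
      rw [sumPhiQC _ _ hc]
    have l2 : ∑ j, b D (f1 j) * b E (f2 j)
        = PhiQC (b D) (b E) (Coalgebra.comul (R := k) (Sinv (Sinv c))) := by
      rw [sumPhiQC _ _ hf]
    rw [l1, l2, hB1 (Sinv (Sinv c)) D E, hSv, hB1 (Sinv c) (S E) (S D), hSv]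
  -- QC1 masters
  have masterQ1 : ∀ (c d : C) (n m : ℕ) (c1 c2 : Fin n → C) (d1 d2 : Fin m → C),
      Coalgebra.comul (R := k) c = ∑ i, c1 i ⊗ₜ[k] c2 i →
      Coalgebra.comul (R := k) d = ∑ j, d1 j ⊗ₜ[k] d2 j →
      ∑ i, ∑ j, b (c1 i) (Sinv (Sinv (d2 j))) * b (S (c2 i)) (d1 j)
        = Coalgebra.counit (R := k) c * Coalgebra.counit (R := k) d := by
    intro c d n m c1 c2 d1 d2 hc hd
    obtain ⟨p, g1, g2, hg⟩ := existsFinQC (Coalgebra.comul (R := k) (S c))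
    have key : ∀ j, ∑ i, b (c1 i) (Sinv (Sinv (d2 j))) * b (S (c2 i)) (d1 j)
        = ∑ l, b (g1 l) (d1 j) * b (S (g2 l)) (d2 j) := by
      intro j
      have l1 : ∑ i, b (c1 i) (Sinv (Sinv (d2 j))) * b (S (c2 i)) (d1 j)
          = PhiQC (b.flip (Sinv (Sinv (d2 j)))) (b.flip (Sinv (d1 j)))
              (Coalgebra.comul (R := k) c) := by
        rw [sumPhiQC _ _ hc]
        simp only [LinearMap.flip_apply, e1]
      rw [l1, hA1 c (Sinv (Sinv (d2 j))) (Sinv (d1 j)), hSv, hSv, sumPhiQC _ _ hg]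
      simp only [LinearMap.flip_apply, e3]
    calc ∑ i, ∑ j, b (c1 i) (Sinv (Sinv (d2 j))) * b (S (c2 i)) (d1 j)
        = ∑ j, ∑ i, b (c1 i) (Sinv (Sinv (d2 j))) * b (S (c2 i)) (d1 j) :=
          Finset.sum_comm
      _ = ∑ j, ∑ l, b (g1 l) (d1 j) * b (S (g2 l)) (d2 j) :=
          Finset.sum_congr rfl fun j _ => key j
      _ = ∑ l, ∑ j, b (g1 l) (d1 j) * b (S (g2 l)) (d2 j) := Finset.sum_comm
      _ = Coalgebra.counit (R := k) (S c) * Coalgebra.counit (R := k) d := by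
          have := (hInv (S c) d p m g1 g2 d1 d2 hg hd).2
          simpa using this
      _ = Coalgebra.counit (R := k) c * Coalgebra.counit (R := k) d := by rw [hSeps]
  have masterQ1b : ∀ (c d : C) (n m : ℕ) (c1 c2 : Fin n → C) (d1 d2 : Fin m → C),
      Coalgebra.comul (R := k) c = ∑ i, c1 i ⊗ₜ[k] c2 i →
      Coalgebra.comul (R := k) d = ∑ j, d1 j ⊗ₜ[k] d2 j →
      ∑ i, ∑ j, b (S (c1 i)) (d2 j) * b (c2 i) (Sinv (Sinv (d1 j)))
        = Coalgebra.counit (R := k) c * Coalgebra.counit (R := k) d := by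
    intro c d n m c1 c2 d1 d2 hc hd
    obtain ⟨p, g1, g2, hg⟩ := existsFinQC (Coalgebra.comul (R := k) (S c))
    have key : ∀ j, ∑ i, b (S (c1 i)) (d2 j) * b (c2 i) (Sinv (Sinv (d1 j)))
        = ∑ l, b (S (g1 l)) (d1 j) * b (g2 l) (d2 j) := by
      intro j
      have l1 : ∑ i, b (S (c1 i)) (d2 j) * b (c2 i) (Sinv (Sinv (d1 j)))
          = PhiQC (b.flip (Sinv (d2 j))) (b.flip (Sinv (Sinv (d1 j))))
              (Coalgebra.comul (R := k) c) := by
        rw [sumPhiQC _ _ hc]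
        simp only [LinearMap.flip_apply, e1]
      rw [l1, hA1 c (Sinv (d2 j)) (Sinv (Sinv (d1 j))), hSv, hSv, sumPhiQC _ _ hg]
      simp only [LinearMap.flip_apply, e3]
    calc ∑ i, ∑ j, b (S (c1 i)) (d2 j) * b (c2 i) (Sinv (Sinv (d1 j)))
        = ∑ j, ∑ i, b (S (c1 i)) (d2 j) * b (c2 i) (Sinv (Sinv (d1 j))) :=
          Finset.sum_comm
      _ = ∑ j, ∑ l, b (S (g1 l)) (d1 j) * b (g2 l) (d2 j) :=
          Finset.sum_congr rfl fun j _ => key j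
      _ = ∑ l, ∑ j, b (S (g1 l)) (d1 j) * b (g2 l) (d2 j) := Finset.sum_comm
      _ = Coalgebra.counit (R := k) (S c) * Coalgebra.counit (R := k) d := by
          have := (hInv (S c) d p m g1 g2 d1 d2 hg hd).1
          simpa using this
      _ = Coalgebra.counit (R := k) c * Coalgebra.counit (R := k) d := by rw [hSeps]
  -- components of the oriented structure
  have hidbij : Function.Bijective (LinearMap.id : C →ₗ[k] C) :=
    ⟨fun a b hab => by simpa using hab, fun a => ⟨a, rfl⟩⟩
  have autoId : IsCoalgAutoWrt (Coalgebra.comul (R := k)) (Coalgebra.counit (R := k))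
      {b, b ∘ₗ S} (LinearMap.id : C →ₗ[k] C) := by
    refine ⟨hidbij, fun c => rfl, ?_⟩
    intro β hβ β' hβ' c d e n m c1 c2 f1 f2 hc hf
    simp only [LinearMap.id_coe, id_eq] at hf ⊢
    constructor
    · rw [show (∑ i, β (c1 i) d * β' (c2 i) e)
          = PhiQC (β.flip d) (β'.flip e) (Coalgebra.comul (R := k) c) from by
            rw [sumPhiQC _ _ hc]; simp,
        show (∑ j, β (f1 j) d * β' (f2 j) e)
          = PhiQC (β.flip d) (β'.flip e) (Coalgebra.comul (R := k) c) from by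
            rw [sumPhiQC _ _ hf]; simp]
    · rw [show (∑ i, β d (c1 i) * β' e (c2 i))
          = PhiQC (β d) (β' e) (Coalgebra.comul (R := k) c) from by
            rw [sumPhiQC _ _ hc],
        show (∑ j, β d (f1 j) * β' e (f2 j))
          = PhiQC (β d) (β' e) (Coalgebra.comul (R := k) c) from by
            rw [sumPhiQC _ _ hf]]
  have hεTu : ∀ c : C, Coalgebra.counit (R := k) ((Sinv ∘ₗ Sinv) c)
      = Coalgebra.counit (R := k) c := fun c => by
    simp only [LinearMap.comp_apply]; rw [hεv, hεv]
  have autoTu : IsCoalgAutoWrt (Coalgebra.comul (R := k)) (Coalgebra.counit (R := k))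
      {b, b ∘ₗ S} (Sinv ∘ₗ Sinv : C →ₗ[k] C) := by
    refine ⟨hTubij, hεTu, ?_⟩
    intro β hβ β' hβ' c d e n m c1 c2 f1 f2 hc hf
    simp only [LinearMap.comp_apply] at hf ⊢
    simp only [Set.mem_insert_iff, Set.mem_singleton_iff] at hβ hβ'
    rcases hβ with rfl | rfl <;> rcases hβ' with rfl | rfl <;>
      constructor
    · simpa only [e1, e2, hSv] using masterA c d e n m c1 c2 f1 f2 hc hf
    · simpa only [e3, e4, hSv] using masterB c d e n m c1 c2 f1 f2 hc hf
    · simpa only [LinearMap.comp_apply, e1, e2, hSv] using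
        masterA c d (Sinv e) n m c1 c2 f1 f2 hc hf
    · simpa only [LinearMap.comp_apply, e3, e4, hSv] using
        masterB c d (S e) n m c1 c2 f1 f2 hc hf
    · simpa only [LinearMap.comp_apply, e1, e2, hSv] using
        masterA c (Sinv d) e n m c1 c2 f1 f2 hc hf
    · simpa only [LinearMap.comp_apply, e3, e4, hSv] using
        masterB c (S d) e n m c1 c2 f1 f2 hc hf
    · simpa only [LinearMap.comp_apply, e1, e2, hSv] using
        masterA c (Sinv d) (Sinv e) n m c1 c2 f1 f2 hc hf
    · simpa only [LinearMap.comp_apply, e3, e4, hSv] using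
        masterB c (S d) (S e) n m c1 c2 f1 f2 hc hf
  have hcomm : (LinearMap.id : C →ₗ[k] C) ∘ₗ (Sinv ∘ₗ Sinv)
      = (Sinv ∘ₗ Sinv) ∘ₗ LinearMap.id := by
    ext x; simp
  have qc1 : QC1 (Coalgebra.comul (R := k)) (Coalgebra.counit (R := k))
      b (b ∘ₗ S) (LinearMap.id : C →ₗ[k] C) (Sinv ∘ₗ Sinv) := by
    intro c d n m c1 c2 d1 d2 hc hd
    constructor
    · simpa only [LinearMap.comp_apply, LinearMap.id_coe, id_eq] using
        masterQ1 c d n m c1 c2 d1 d2 hc hd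
    · simpa only [LinearMap.comp_apply, LinearMap.id_coe, id_eq] using
        masterQ1b c d n m c1 c2 d1 d2 hc hd
  have qc2 : QC2 b (LinearMap.id : C →ₗ[k] C) (Sinv ∘ₗ Sinv) := by
    intro c d
    constructor
    · simp
    · simp only [LinearMap.comp_apply]
      rw [e2, e2, hSv, hSv]
  refine ⟨⟨hInv, autoId, autoTu, hcomm, qc1, qc2, hYB⟩, fun hst => ?_⟩
  -- strict case
  have hmapSv : ∀ X : C ⊗[k] C,
      TensorProduct.map Sinv Sinv (TensorProduct.map S S X) = X := by
    intro X
    induction X with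
    | zero => simp
    | tmul x y => simp [hvS]
    | add x y hx hy => simp [hx, hy]
  have step1 : ∀ c : C, Coalgebra.comul (R := k) (S c)
      = TensorProduct.comm k C C (TensorProduct.map S S (Coalgebra.comul (R := k) c)) := by
    intro c
    rw [← hst c, commCommQC]
  have step2 : ∀ c : C, Coalgebra.comul (R := k) (S (S c))
      = TensorProduct.map S S (TensorProduct.map S S (Coalgebra.comul (R := k) c)) := by
    intro c
    rw [step1 (S c), step1 c, ← commMapQC, commCommQC]
  have stepTu : Coalgebra.comul (R := k) ∘ₗ (Sinv ∘ₗ Sinv : C →ₗ[k] C)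
      = TensorProduct.map (Sinv ∘ₗ Sinv) (Sinv ∘ₗ Sinv) ∘ₗ Coalgebra.comul (R := k) := by
    apply LinearMap.ext
    intro x
    have h4 := step2 (Sinv (Sinv x))
    rw [hSv, hSv] at h4
    have h5 : TensorProduct.map Sinv Sinv (TensorProduct.map Sinv Sinv
        (Coalgebra.comul (R := k) x)) = Coalgebra.comul (R := k) (Sinv (Sinv x)) := by
      rw [h4, hmapSv, hmapSv]
    simp only [LinearMap.comp_apply]
    rw [← h5, TensorProduct.map_comp, LinearMap.comp_apply]
  refine ⟨hInv, ⟨hidbij, fun c => rfl, by ext x; simp⟩,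
    ⟨hTubij, hεTu, stepTu⟩, hcomm, qc1, qc2, hYB⟩
end
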